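/- arXiv:1705.07066 — 4 statements merged into one kernel-verified Lean document; each statement's English description precedes it below -/
import Mathlib

section
/- Let H be a simple graph with a legal colouring c, and suppose {x1, x2, x3, y} forms a clique of size 4 in H. Then H has a legal colouring c′ in which the triangle x1x2x3 is not monochromatic. -/
open SimpleGraph

def IsCycleEdgeSet {V : Type*} (G : SimpleGraph V) (s : Set (Sym2 V)) : Prop :=
  ∃ (v : V) (w : G.Walk v v), w.IsCycle ∧ s = {e | e ∈ w.edges}

def HasCycleDecompLE {V : Type*} (G : SimpleGraph V) (m : ℕ) : Prop :=
  ∃ (n : ℕ) (f : Fin n → Set (Sym2 V)), n ≤ m ∧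
    (∀ i, IsCycleEdgeSet G (f i)) ∧
    (Pairwise fun i j => Disjoint (f i) (f j)) ∧
    (⋃ i, f i) = G.edgeSet

def IsLegalColouringWith {V : Type*} (G : SimpleGraph V) (c : Sym2 V → ℕ) (m : ℕ) : Prop :=
  (∀ e ∈ G.edgeSet, 1 ≤ c e ∧ c e ≤ m) ∧
  ∀ i : ℕ, ({e ∈ G.edgeSet | c e = i}).Nonempty → IsCycleEdgeSet G {e ∈ G.edgeSet | c e = i}

def IsLegalColouring {V : Type*} [Fintype V] (G : SimpleGraph V) (c : Sym2 V → ℕ) : Prop :=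
  IsLegalColouringWith G c ((Fintype.card V - 1) / 2)

section Helpers

open SimpleGraph Walk

variable {V : Type*} [DecidableEq V] {H : SimpleGraph V}


lemma mem_supp {u v x : V} {p : H.Walk u v} {e : Sym2 V} (he : e ∈ p.edges) (hx : x ∈ e) :
    x ∈ p.support := by
  induction e with
  | _ a b =>
    rw [Sym2.mem_iff] at hx
    rcases hx with rfl | rfl
    · exact p.fst_mem_support_of_mem_edges he
    · exact p.snd_mem_support_of_mem_edges he

/-- In a walk with no duplicate vertices, an edge containing the final vertex is the last edge. -/
lemma last_edge : ∀ {s t : V} (Q : H.Walk s t), Q.support.Nodup → ∀ {e : Sym2 V},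
    e ∈ Q.edges → t ∈ e →
    ∃ (w : V) (h : H.Adj w t) (Q₂ : H.Walk s w), Q = Q₂.concat h ∧ e = s(w, t) := by
  intro s t Q
  induction Q with
  | nil => simp
  | @cons a b t' h Q' ih =>
    intro hnd e he hte
    rw [support_cons, List.nodup_cons] at hnd
    rw [edges_cons, List.mem_cons] at he
    rcases he with rfl | he
    · rw [Sym2.mem_iff] at hte
      rcases hte with rfl | rfl
      · exact absurd Q'.end_mem_support hnd.1
      · have : Q' = Walk.nil := (Walk.isPath_iff_eq_nil (p := Q')).mp (Walk.IsPath.mk' hnd.2)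
        subst this
        exact ⟨a, h, Walk.nil, by rw [Walk.concat_nil], rfl⟩
    · obtain ⟨w, hw, Q₂, rfl, rfl⟩ := ih hnd.2 he hte
      exact ⟨w, hw, Walk.cons h Q₂, by rw [Walk.concat_cons], rfl⟩

/-- A path whose endpoints are joined by one of its edges is a single edge. -/
lemma path_edge_both_ends {a b : V} (Q : H.Walk a b) (hQ : Q.IsPath) (hab : a ≠ b)
    {e : Sym2 V} (he : e ∈ Q.edges) (ha : a ∈ e) (hb : b ∈ e) : Q.edges = [s(a, b)] := by
  cases Q with
  | nil => simp at he
  | @cons _ v _ h Q' =>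
    rw [Walk.cons_isPath_iff] at hQ
    rw [edges_cons, List.mem_cons] at he
    rcases he with rfl | he
    · rw [Sym2.mem_iff] at hb
      rcases hb with rfl | rfl
      · exact absurd rfl hab
      · have : Q' = Walk.nil := (Walk.isPath_iff_eq_nil (p := Q')).mp hQ.1
        subst this; simp
    · exact absurd (mem_supp he ha) hQ.2

lemma anchor' {p y : V} (W : H.Walk y y) (hW : W.IsCycle) (he : s(p, y) ∈ W.edges)
    (hpy : p ≠ y) :
    ∃ (h : H.Adj y p) (P : H.Walk p y), (Walk.cons h P).IsCycle ∧
      ∀ e, e ∈ (Walk.cons h P).edges ↔ e ∈ W.edges := by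
  cases W with
  | nil => simp at he
  | @cons _ u _ h q =>
    obtain ⟨hq, hne⟩ := (Walk.cons_isCycle_iff q h).mp hW
    rw [edges_cons, List.mem_cons] at he
    rcases he with he | he
    · rw [Sym2.eq_iff] at he
      rcases he with ⟨rfl, rfl⟩ | ⟨rfl, -⟩
      · exact absurd rfl hpy
      · exact ⟨h, q, hW, fun e => Iff.rfl⟩
    · obtain ⟨w₀, hadj, Q₂, rfl, heq⟩ := last_edge q hq.support_nodup he (by simp)
      rw [Sym2.eq_iff] at heq
      rcases heq with ⟨rfl, -⟩ | ⟨rfl, rfl⟩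
      swap
      · exact absurd rfl hpy
      have hpu : p ≠ u := by
        rintro rfl
        exact hne (by rwa [Sym2.eq_swap] at he)
      have hyQ₂ : y ∉ Q₂.support := by
        have hnd2 := hq.support_nodup
        rw [support_concat] at hnd2
        simp only [List.concat_eq_append, List.nodup_append, List.nodup_cons] at hnd2
        intro hy
        exact hnd2.2.2 y hy y (by simp) rfl
      have h1 : (Walk.cons h Q₂).IsPath := by
        refine Walk.IsPath.cons ?_ hyQ₂
        have := hq
        rw [concat_eq_append] at this
        exact this.of_append_left
      refine ⟨hadj.symm, (Walk.cons h Q₂).reverse, ?_, ?_⟩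
      · rw [Walk.cons_isCycle_iff]
        refine ⟨h1.reverse, ?_⟩
        rw [edges_reverse, List.mem_reverse, edges_cons, List.mem_cons]
        rintro (h2 | h2)
        · rw [Sym2.eq_iff] at h2
          rcases h2 with ⟨-, rfl⟩ | ⟨rfl, rfl⟩
          · exact hpu rfl
          · exact hpy rfl
        · exact hyQ₂ (mem_supp h2 (by simp))
      · intro e
        rw [edges_cons, List.mem_cons, edges_reverse, List.mem_reverse, edges_cons,
          List.mem_cons, edges_cons, List.mem_cons, edges_concat, List.concat_eq_append,
          List.mem_append, List.mem_singleton]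
        rw [Sym2.eq_swap (a := y) (b := p)]
        tauto

lemma anchor {S : Set (Sym2 V)} (hS : IsCycleEdgeSet H S) {p y : V} (he : s(p, y) ∈ S) :
    ∃ (h : H.Adj y p) (P : H.Walk p y), (Walk.cons h P).IsCycle ∧
      S = {e | e ∈ (Walk.cons h P).edges} := by
  obtain ⟨v, w, hw, rfl⟩ := hS
  have he' : s(p, y) ∈ w.edges := he
  have hpy : p ≠ y := (w.adj_of_mem_edges he').ne
  have hy : y ∈ w.support := w.snd_mem_support_of_mem_edges he'
  have hperm := (w.rotate_edges y hy).perm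
  obtain ⟨h, P, hc, hiff⟩ := anchor' (w.rotate y hy) (hw.rotate hy) (hperm.mem_iff.mpr he') hpy
  refine ⟨h, P, hc, ?_⟩
  ext e
  simp only [Set.mem_setOf_eq]
  rw [hiff e, hperm.mem_iff]

lemma split {p y : V} (hyp : H.Adj y p) (P : H.Walk p y) (hcyc : (Walk.cons hyp P).IsCycle)
    {q r : V} (hpq : H.Adj p q) (hqr : H.Adj q r) (hrp : H.Adj r p)
    (hqy : q ≠ y) (hry : r ≠ y)
    (hT1 : s(p, q) ∉ P.edges) (hT2 : s(q, r) ∉ P.edges) (hT3 : s(r, p) ∉ P.edges)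
    (hq : q ∈ P.support) (hr : r ∉ (P.takeUntil q hq).support) :
    ∃ F1 F2 : Set (Sym2 V), IsCycleEdgeSet H F1 ∧ IsCycleEdgeSet H F2 ∧ Disjoint F1 F2 ∧
      (F1 ∪ F2 = {e | e ∈ (Walk.cons hyp P).edges} ∪ {s(p, q), s(q, r), s(r, p)}) ∧
      s(p, q) ∈ F1 ∧ s(q, r) ∈ F2 := by
  obtain ⟨hPp, hePy⟩ := (Walk.cons_isCycle_iff P hyp).mp hcyc
  set P1 := P.takeUntil q hq with hP1def
  set P2 := P.dropUntil q hq with hP2def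
  have hspec : P1.append P2 = P := P.take_spec hq
  have hP1 : P1.IsPath := hPp.takeUntil hq
  have hP2 : P2.IsPath := hPp.dropUntil hq
  have hedges : P1.edges ++ P2.edges = P.edges := by rw [← Walk.edges_append, hspec]
  have hsub1 : P1.edges ⊆ P.edges := P.edges_takeUntil_subset hq
  have hsub2 : P2.edges ⊆ P.edges := P.edges_dropUntil_subset hq
  have hdisjsup : P1.support.Disjoint P2.support.tail := by
    have h0 := hPp.support_nodup
    rw [← hspec, Walk.support_append] at h0
    exact (List.nodup_append'.mp h0).2.2
  have hdisje : P1.edges.Disjoint P2.edges := by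
    have h0 := hPp.isTrail.edges_nodup
    rw [← hedges] at h0
    exact (List.nodup_append'.mp h0).2.2
  have hpP2 : p ∉ P2.support := by
    rw [Walk.support_eq_cons, List.mem_cons]
    rintro (h | h)
    · exact hpq.ne h
    · exact hdisjsup P1.start_mem_support h
  -- the two new cycles
  have hC1 : (Walk.cons hyp.symm (Walk.cons hpq P2).reverse).IsCycle := by
    rw [Walk.cons_isCycle_iff]
    refine ⟨(hP2.cons hpP2).reverse, ?_⟩
    rw [edges_reverse, List.mem_reverse, edges_cons, List.mem_cons]
    rintro (h | h)
    · rw [Sym2.eq_iff] at h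
      rcases h with ⟨-, h⟩ | ⟨h, -⟩
      · exact hqy h.symm
      · exact hpq.ne h
    · exact hePy (by rw [Sym2.eq_swap]; exact hsub2 h)
  have hC2 : (Walk.cons hqr (Walk.cons hrp P1)).IsCycle := by
    rw [Walk.cons_isCycle_iff]
    refine ⟨hP1.cons hr, ?_⟩
    rw [edges_cons, List.mem_cons]
    rintro (h | h)
    · rw [Sym2.eq_iff] at h
      rcases h with ⟨h, -⟩ | ⟨h, -⟩
      · exact hqr.ne h
      · exact hpq.ne h.symm
    · exact hT2 (hsub1 h)
  have hm1 : ∀ e, e ∈ (Walk.cons hyp.symm (Walk.cons hpq P2).reverse).edges ↔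
      (e = s(p, y) ∨ e = s(p, q) ∨ e ∈ P2.edges) := by
    intro e
    rw [edges_cons, List.mem_cons, edges_reverse, List.mem_reverse, edges_cons, List.mem_cons]
  have hm2 : ∀ e, e ∈ (Walk.cons hqr (Walk.cons hrp P1)).edges ↔
      (e = s(q, r) ∨ e = s(r, p) ∨ e ∈ P1.edges) := by
    intro e
    rw [edges_cons, List.mem_cons, edges_cons, List.mem_cons]
  refine ⟨{e | e ∈ (Walk.cons hyp.symm (Walk.cons hpq P2).reverse).edges},
    {e | e ∈ (Walk.cons hqr (Walk.cons hrp P1)).edges}, ⟨p, _, hC1, rfl⟩, ⟨q, _, hC2, rfl⟩,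
    ?_, ?_, ?_, ?_⟩
  · rw [Set.disjoint_left]
    intro e he1 he2
    rw [Set.mem_setOf_eq, hm1] at he1
    rw [Set.mem_setOf_eq, hm2] at he2
    rcases he1 with rfl | rfl | he1 <;> rcases he2 with h | h | h
    · rw [Sym2.eq_iff] at h; rcases h with ⟨h, -⟩ | ⟨-, h⟩
      · exact hpq.ne h
      · exact hqy h.symm
    · rw [Sym2.eq_iff] at h; rcases h with ⟨h, -⟩ | ⟨-, h⟩
      · exact hrp.ne h.symm
      · exact hry h.symm
    · exact hePy (by rw [Sym2.eq_swap]; exact hsub1 h)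
    · rw [Sym2.eq_iff] at h; rcases h with ⟨h, -⟩ | ⟨h, -⟩
      · exact hpq.ne h
      · exact hrp.ne h.symm
    · rw [Sym2.eq_iff] at h; rcases h with ⟨h, -⟩ | ⟨-, h⟩
      · exact hrp.ne h.symm
      · exact hqr.ne h
    · exact hT1 (hsub1 h)
    · exact hT2 (hsub2 (h ▸ he1))
    · exact hT3 (hsub2 (h ▸ he1))
    · exact hdisje h he1
  · ext e
    simp only [Set.mem_union, Set.mem_setOf_eq, hm1, hm2, Set.mem_insert_iff,
      Set.mem_singleton_iff]
    rw [edges_cons, List.mem_cons, ← hedges, List.mem_append,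
      Sym2.eq_swap (a := y) (b := p)]
    tauto
  · rw [Set.mem_setOf_eq, hm1]; tauto
  · rw [Set.mem_setOf_eq, hm2]; tauto

lemma rotateCycle {p y : V} (hyp : H.Adj y p) (P : H.Walk p y) (hcyc : (Walk.cons hyp P).IsCycle)
    {q : V} (hpq : H.Adj p q) (hqy : H.Adj q y) (hqP : q ∉ P.support) :
    ∃ F : Set (Sym2 V), IsCycleEdgeSet H F ∧
      ∀ e, e ∈ F ↔ (e = s(p, q) ∨ e = s(q, y) ∨ e ∈ P.edges) := by
  obtain ⟨hPp, hePy⟩ := (Walk.cons_isCycle_iff P hyp).mp hcyc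
  have hkey : P.concat hqy.symm = (Walk.cons hqy P.reverse).reverse := by
    rw [Walk.reverse_cons, Walk.reverse_reverse]
    exact Walk.concat_eq_append P hqy.symm
  have hC : (Walk.cons hpq.symm (P.concat hqy.symm)).IsCycle := by
    rw [Walk.cons_isCycle_iff]
    constructor
    · rw [hkey]
      refine Walk.IsPath.reverse (Walk.IsPath.cons hPp.reverse ?_)
      rw [Walk.support_reverse, List.mem_reverse]
      exact hqP
    · rw [Walk.edges_concat, List.concat_eq_append, List.mem_append, List.mem_singleton]
      rintro (h | h)
      · exact hqP (mem_supp h (by simp))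
      · rw [Sym2.eq_iff] at h
        rcases h with ⟨h, -⟩ | ⟨-, h⟩
        · exact hqy.ne h
        · exact hyp.ne h.symm
  refine ⟨{e | e ∈ (Walk.cons hpq.symm (P.concat hqy.symm)).edges}, ⟨q, _, hC, rfl⟩, ?_⟩
  intro e
  rw [Set.mem_setOf_eq, edges_cons, List.mem_cons, Walk.edges_concat, List.concat_eq_append,
    List.mem_append, List.mem_singleton, Sym2.eq_swap (a := q) (b := p),
    Sym2.eq_swap (a := y) (b := q)]
  tauto

lemma triangle_cycle {S : Set (Sym2 V)} (hS : IsCycleEdgeSet H S)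
    {x1 x2 x3 : V} (d12 : x1 ≠ x2) (d13 : x1 ≠ x3) (d23 : x2 ≠ x3)
    (h1 : s(x1, x2) ∈ S) (h2 : s(x2, x3) ∈ S) (h3 : s(x3, x1) ∈ S) :
    S = {s(x1, x2), s(x2, x3), s(x3, x1)} := by
  obtain ⟨h, P, hc, rfl⟩ := anchor hS h1
  obtain ⟨hPp, hne⟩ := (Walk.cons_isCycle_iff P h).mp hc
  have h2' : s(x2, x3) ∈ P.edges := by
    have h2'' : s(x2, x3) ∈ (Walk.cons h P).edges := h2
    rw [edges_cons, List.mem_cons] at h2''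
    rcases h2'' with h0 | h0
    · rw [Sym2.eq_iff] at h0
      rcases h0 with ⟨-, h0⟩ | ⟨h0, -⟩
      · exact absurd h0.symm d13
      · exact absurd h0.symm d12
    · exact h0
  obtain ⟨w₀, hadj, Q₂, rfl, heq⟩ := last_edge P hPp.support_nodup h2' (by simp)
  rw [Sym2.eq_iff] at heq
  rcases heq with ⟨-, h0⟩ | ⟨-, rfl⟩
  · exact absurd h0 d23.symm
  have hQ₂ : Q₂.IsPath := by
    have h0 := hPp
    rw [Walk.concat_eq_append] at h0
    exact h0.of_append_left
  have h3' : s(x3, x1) ∈ Q₂.edges := by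
    have h3'' : s(x3, x1) ∈ (Walk.cons h (Q₂.concat hadj)).edges := h3
    rw [edges_cons, List.mem_cons, Walk.edges_concat, List.concat_eq_append, List.mem_append,
      List.mem_singleton] at h3''
    rcases h3'' with h0 | h0 | h0
    · rw [Sym2.eq_iff] at h0
      rcases h0 with ⟨h0, -⟩ | ⟨h0, -⟩
      · exact absurd h0 d23.symm
      · exact absurd h0 d13.symm
    · exact h0
    · rw [Sym2.eq_iff] at h0
      rcases h0 with ⟨-, h0⟩ | ⟨h0, -⟩
      · exact absurd h0 d12
      · exact absurd h0 d23.symm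
  have hfl := path_edge_both_ends Q₂ hQ₂ d13 h3' (by simp) (by simp)
  ext e
  rw [Set.mem_setOf_eq, edges_cons, List.mem_cons, Walk.edges_concat, List.concat_eq_append,
    hfl, List.mem_append, List.mem_singleton, List.mem_singleton,
    Sym2.eq_swap (a := x2) (b := x1), Sym2.eq_swap (a := x1) (b := x3),
    Sym2.eq_swap (a := x3) (b := x2)]
  simp only [Set.mem_insert_iff, Set.mem_singleton_iff]
  tauto

lemma take_comm {u v : V} (P : H.Walk u v) (hnd : P.support.Nodup) :
    ∀ {q r : V} (hq : q ∈ P.support) (hr' : r ∈ P.support),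
      r ∈ (P.takeUntil q hq).support → r ≠ q → q ∉ (P.takeUntil r hr').support := by
  induction P with
  | nil =>
    intro q r hq hr' h hrq
    rw [Walk.mem_support_nil_iff] at hq hr'
    exact absurd (hr'.trans hq.symm) hrq
  | @cons u w v h' P' ih =>
    intro q r hq hr' hrtake hrq hqtake
    rw [support_cons, List.nodup_cons] at hnd
    by_cases huq : u = q
    · subst huq
      rw [Walk.takeUntil] at hrtake
      simp at hrtake
      exact hrq hrtake
    · by_cases hur : u = r
      · subst hur
        rw [Walk.takeUntil] at hqtake
        simp at hqtake
        exact huq hqtake.symm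
      · have hq2 : q ∈ P'.support := by
          cases hq with
          | head => exact absurd rfl huq
          | tail _ h0 => exact h0
        have hr2 : r ∈ P'.support := by
          cases hr' with
          | head => exact absurd rfl hur
          | tail _ h0 => exact h0
        rw [Walk.takeUntil, dif_neg huq] at hrtake
        rw [Walk.takeUntil, dif_neg hur] at hqtake
        rw [support_cons, List.mem_cons] at hrtake hqtake
        rcases hrtake with h0 | hrtake
        · exact hur h0.symm
        rcases hqtake with h0 | hqtake
        · exact huq h0.symm
        exact ih hnd.2 hq2 hr2 hrtake hrq hqtake

open scoped Classical in
lemma recolour2 {c : Sym2 V → ℕ} {m : ℕ} (hc : IsLegalColouringWith H c m)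
    {i a : ℕ} (hia : i ≠ a) (hi1 : 1 ≤ i) (hi2 : i ≤ m) (ha1 : 1 ≤ a) (ha2 : a ≤ m)
    {F1 F2 : Set (Sym2 V)} (hF1 : IsCycleEdgeSet H F1) (hF2 : IsCycleEdgeSet H F2)
    (hdisj : Disjoint F1 F2)
    (hun : F1 ∪ F2 = {e ∈ H.edgeSet | c e = i} ∪ {e ∈ H.edgeSet | c e = a}) :
    IsLegalColouringWith H (fun e => if e ∈ F1 then i else if e ∈ F2 then a else c e) m := by
  have hsub : F1 ∪ F2 ⊆ H.edgeSet := by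
    rw [hun]; rintro e (⟨h, -⟩ | ⟨h, -⟩) <;> exact h
  have hmemun : ∀ e, e ∈ F1 ∪ F2 → c e = i ∨ c e = a := by
    intro e he; rw [hun] at he; rcases he with ⟨-, h⟩ | ⟨-, h⟩ <;> tauto
  have hrev : ∀ e ∈ H.edgeSet, (c e = i ∨ c e = a) → e ∈ F1 ∪ F2 := by
    intro e he h
    rw [hun]
    rcases h with h | h
    · exact Or.inl ⟨he, h⟩
    · exact Or.inr ⟨he, h⟩
  constructor
  · intro e he
    by_cases h1 : e ∈ F1
    · simp only [if_pos h1]; exact ⟨hi1, hi2⟩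
    by_cases h2 : e ∈ F2
    · simp only [if_neg h1, if_pos h2]; exact ⟨ha1, ha2⟩
    · simp only [if_neg h1, if_neg h2]; exact hc.1 e he
  · intro j hne
    by_cases hji : j = i
    · subst hji
      have hcl : {e ∈ H.edgeSet | (if e ∈ F1 then j else if e ∈ F2 then a else c e) = j} = F1 := by
        ext e
        simp only [Set.mem_setOf_eq]
        constructor
        · rintro ⟨he, hval⟩
          by_cases h1 : e ∈ F1
          · exact h1
          by_cases h2 : e ∈ F2
          · rw [if_neg h1, if_pos h2] at hval; exact absurd hval.symm hia
          · rw [if_neg h1, if_neg h2] at hval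
            rcases hrev e he (Or.inl hval) with h | h
            · exact h
            · exact absurd h h2
        · intro h1
          exact ⟨hsub (Or.inl h1), if_pos h1⟩
      rw [hcl]
      exact hF1
    · by_cases hja : j = a
      · subst hja
        have hcl : {e ∈ H.edgeSet | (if e ∈ F1 then i else if e ∈ F2 then j else c e) = j} = F2 := by
          ext e
          simp only [Set.mem_setOf_eq]
          constructor
          · rintro ⟨he, hval⟩
            by_cases h1 : e ∈ F1
            · rw [if_pos h1] at hval; exact absurd hval hia
            by_cases h2 : e ∈ F2
            · exact h2
            · rw [if_neg h1, if_neg h2] at hval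
              rcases hrev e he (Or.inr hval) with h | h
              · exact absurd h h1
              · exact h
          · intro h2
            have h1 : e ∉ F1 := fun h1 => hdisj.ne_of_mem h1 h2 rfl
            exact ⟨hsub (Or.inr h2), by rw [if_neg h1, if_pos h2]⟩
        rw [hcl]
        exact hF2
      · have hcl : {e ∈ H.edgeSet | (if e ∈ F1 then i else if e ∈ F2 then a else c e) = j} =
            {e ∈ H.edgeSet | c e = j} := by
          ext e
          simp only [Set.mem_setOf_eq]
          constructor
          · rintro ⟨he, hval⟩
            by_cases h1 : e ∈ F1
            · rw [if_pos h1] at hval; exact absurd hval.symm hji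
            by_cases h2 : e ∈ F2
            · rw [if_neg h1, if_pos h2] at hval; exact absurd hval.symm hja
            · rw [if_neg h1, if_neg h2] at hval; exact ⟨he, hval⟩
          · rintro ⟨he, hval⟩
            have h12 : e ∉ F1 ∪ F2 := by
              intro h
              rcases hmemun e h with h' | h'
              · exact hji (hval ▸ h')
              · exact hja (hval ▸ h')
            rw [if_neg (fun h => h12 (Or.inl h)), if_neg (fun h => h12 (Or.inr h))]
            exact ⟨he, hval⟩
        rw [hcl] at hne ⊢
        exact hc.2 j hne

open scoped Classical in
lemma recolour3 {c : Sym2 V → ℕ} {m : ℕ} (hc : IsLegalColouringWith H c m)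
    {i a b d : ℕ} (hia : i ≠ a) (hib : i ≠ b) (hid : i ≠ d)
    (hab : a ≠ b) (had : a ≠ d) (hbd : b ≠ d)
    (ha1 : 1 ≤ a) (ha2 : a ≤ m) (hb1 : 1 ≤ b) (hb2 : b ≤ m) (hd1 : 1 ≤ d) (hd2 : d ≤ m)
    {F1 F2 F3 : Set (Sym2 V)}
    (hF1 : IsCycleEdgeSet H F1) (hF2 : IsCycleEdgeSet H F2) (hF3 : IsCycleEdgeSet H F3)
    (h12 : Disjoint F1 F2) (h13 : Disjoint F1 F3) (h23 : Disjoint F2 F3)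
    (hun : F1 ∪ F2 ∪ F3 = {e ∈ H.edgeSet | c e = a} ∪ {e ∈ H.edgeSet | c e = b} ∪
      {e ∈ H.edgeSet | c e = d} ∪ {e ∈ H.edgeSet | c e = i}) :
    IsLegalColouringWith H
      (fun e => if e ∈ F1 then a else if e ∈ F2 then b else if e ∈ F3 then d else c e) m := by
  have hsub : F1 ∪ F2 ∪ F3 ⊆ H.edgeSet := by
    rw [hun]; rintro e (((⟨h, -⟩ | ⟨h, -⟩) | ⟨h, -⟩) | ⟨h, -⟩) <;> exact h
  have hmemun : ∀ e, e ∈ F1 ∪ F2 ∪ F3 → c e = a ∨ c e = b ∨ c e = d ∨ c e = i := by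
    intro e he; rw [hun] at he
    rcases he with ((⟨-, h⟩ | ⟨-, h⟩) | ⟨-, h⟩) | ⟨-, h⟩ <;> tauto
  have hrev : ∀ e ∈ H.edgeSet, (c e = a ∨ c e = b ∨ c e = d ∨ c e = i) → e ∈ F1 ∪ F2 ∪ F3 := by
    intro e he h
    rw [hun]
    rcases h with h | h | h | h
    · exact Or.inl (Or.inl (Or.inl ⟨he, h⟩))
    · exact Or.inl (Or.inl (Or.inr ⟨he, h⟩))
    · exact Or.inl (Or.inr ⟨he, h⟩)
    · exact Or.inr ⟨he, h⟩
  constructor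
  · intro e he
    by_cases h1 : e ∈ F1
    · simp only [if_pos h1]; exact ⟨ha1, ha2⟩
    by_cases h2 : e ∈ F2
    · simp only [if_neg h1, if_pos h2]; exact ⟨hb1, hb2⟩
    by_cases h3 : e ∈ F3
    · simp only [if_neg h1, if_neg h2, if_pos h3]; exact ⟨hd1, hd2⟩
    · simp only [if_neg h1, if_neg h2, if_neg h3]; exact hc.1 e he
  · intro j hne
    have hval : ∀ e, e ∈ H.edgeSet →
        (if e ∈ F1 then a else if e ∈ F2 then b else if e ∈ F3 then d else c e) = j →
        ((e ∈ F1 ∧ j = a) ∨ (e ∈ F2 ∧ j = b) ∨ (e ∈ F3 ∧ j = d) ∨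
          (e ∉ F1 ∪ F2 ∪ F3 ∧ c e = j)) := by
      intro e he hv
      by_cases h1 : e ∈ F1
      · rw [if_pos h1] at hv; exact Or.inl ⟨h1, hv.symm⟩
      by_cases h2 : e ∈ F2
      · rw [if_neg h1, if_pos h2] at hv; exact Or.inr (Or.inl ⟨h2, hv.symm⟩)
      by_cases h3 : e ∈ F3
      · rw [if_neg h1, if_neg h2, if_pos h3] at hv; exact Or.inr (Or.inr (Or.inl ⟨h3, hv.symm⟩))
      · rw [if_neg h1, if_neg h2, if_neg h3] at hv
        refine Or.inr (Or.inr (Or.inr ⟨?_, hv⟩))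
        rintro (( h | h ) | h) <;> [exact h1 h; exact h2 h; exact h3 h]
    by_cases hja : j = a
    · subst hja
      have hcl : {e ∈ H.edgeSet |
          (if e ∈ F1 then j else if e ∈ F2 then b else if e ∈ F3 then d else c e) = j} = F1 := by
        ext e
        simp only [Set.mem_setOf_eq]
        constructor
        · rintro ⟨he, hv⟩
          rcases hval e he hv with ⟨h, -⟩ | ⟨-, h⟩ | ⟨-, h⟩ | ⟨h, h'⟩
          · exact h
          · exact absurd h hab
          · exact absurd h had
          · exact absurd (hrev e he (Or.inl h')) h
        · intro h1
          exact ⟨hsub (Or.inl (Or.inl h1)), if_pos h1⟩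
      rw [hcl]; exact hF1
    by_cases hjb : j = b
    · subst hjb
      have hcl : {e ∈ H.edgeSet |
          (if e ∈ F1 then a else if e ∈ F2 then j else if e ∈ F3 then d else c e) = j} = F2 := by
        ext e
        simp only [Set.mem_setOf_eq]
        constructor
        · rintro ⟨he, hv⟩
          rcases hval e he hv with ⟨-, h⟩ | ⟨h, -⟩ | ⟨-, h⟩ | ⟨h, h'⟩
          · exact absurd h.symm hab
          · exact h
          · exact absurd h hbd
          · exact absurd (hrev e he (Or.inr (Or.inl h'))) h
        · intro h2
          have h1 : e ∉ F1 := fun h1 => h12.ne_of_mem h1 h2 rfl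
          exact ⟨hsub (Or.inl (Or.inr h2)), by rw [if_neg h1, if_pos h2]⟩
      rw [hcl]; exact hF2
    by_cases hjd : j = d
    · subst hjd
      have hcl : {e ∈ H.edgeSet |
          (if e ∈ F1 then a else if e ∈ F2 then b else if e ∈ F3 then j else c e) = j} = F3 := by
        ext e
        simp only [Set.mem_setOf_eq]
        constructor
        · rintro ⟨he, hv⟩
          rcases hval e he hv with ⟨-, h⟩ | ⟨-, h⟩ | ⟨h, -⟩ | ⟨h, h'⟩
          · exact absurd h.symm had
          · exact absurd h.symm hbd
          · exact h
          · exact absurd (hrev e he (Or.inr (Or.inr (Or.inl h')))) h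
        · intro h3
          have h1 : e ∉ F1 := fun h1 => h13.ne_of_mem h1 h3 rfl
          have h2 : e ∉ F2 := fun h2 => h23.ne_of_mem h2 h3 rfl
          exact ⟨hsub (Or.inr h3), by rw [if_neg h1, if_neg h2, if_pos h3]⟩
      rw [hcl]; exact hF3
    · by_cases hji : j = i
      · subst hji
        exfalso
        obtain ⟨e, he, hv⟩ := hne
        rcases hval e he hv with ⟨-, h⟩ | ⟨-, h⟩ | ⟨-, h⟩ | ⟨h, h'⟩
        · exact hja h
        · exact hjb h
        · exact hjd h
        · exact h (hrev e he (Or.inr (Or.inr (Or.inr h'))))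
      · have hcl : {e ∈ H.edgeSet |
            (if e ∈ F1 then a else if e ∈ F2 then b else if e ∈ F3 then d else c e) = j} =
            {e ∈ H.edgeSet | c e = j} := by
          ext e
          simp only [Set.mem_setOf_eq]
          constructor
          · rintro ⟨he, hv⟩
            rcases hval e he hv with ⟨-, h⟩ | ⟨-, h⟩ | ⟨-, h⟩ | ⟨-, h⟩
            · exact absurd h hja
            · exact absurd h hjb
            · exact absurd h hjd
            · exact ⟨he, h⟩
          · rintro ⟨he, hv⟩
            have h123 : e ∉ F1 ∪ F2 ∪ F3 := by
              intro h
              rcases hmemun e h with h' | h' | h' | h'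
              · exact hja (hv ▸ h')
              · exact hjb (hv ▸ h')
              · exact hjd (hv ▸ h')
              · exact hji (hv ▸ h')
            rw [if_neg (fun h => h123 (Or.inl (Or.inl h))),
              if_neg (fun h => h123 (Or.inl (Or.inr h))), if_neg (fun h => h123 (Or.inr h))]
            exact ⟨he, hv⟩
        rw [hcl] at hne ⊢
        exact hc.2 j hne

lemma mem_edge_of_mem_support {u v x : V} (P : H.Walk u v) (hnn : ¬P.Nil) (hx : x ∈ P.support) :
    ∃ e ∈ P.edges, x ∈ e := by
  induction P with
  | nil => simp at hnn
  | @cons s t v h P' ih =>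
    rw [support_cons, List.mem_cons] at hx
    rcases hx with rfl | hx
    · exact ⟨s(x, t), by simp, by simp⟩
    · by_cases hnil : P'.Nil
      · rw [Walk.nil_iff_support_eq] at hnil
        rw [hnil, List.mem_singleton] at hx
        subst hx
        exact ⟨s(s, x), by simp, by simp⟩
      · obtain ⟨e, he, hxe⟩ := ih hnil hx
        exact ⟨e, by simp [he], hxe⟩

open scoped Classical in
lemma main_split {c : Sym2 V → ℕ} {m : ℕ} (hc : IsLegalColouringWith H c m)
    {p q r y : V} (hpq : H.Adj p q) (hqr : H.Adj q r) (hrp : H.Adj r p) (hpy : H.Adj p y)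
    (hqy : q ≠ y) (hry : r ≠ y)
    (hcls : {e ∈ H.edgeSet | c e = c s(p, q)} = {s(p, q), s(q, r), s(r, p)})
    (hq : ∃ e ∈ {e ∈ H.edgeSet | c e = c s(p, y)}, q ∈ e) :
    ∃ c', IsLegalColouringWith H c' m ∧
      ¬(c' s(p, q) = c' s(q, r) ∧ c' s(q, r) = c' s(r, p)) := by
  set i := c s(p, q) with hidef
  set a := c s(p, y) with hadef
  have hpe : s(p, q) ∈ H.edgeSet := hpq
  have hpye : s(p, y) ∈ H.edgeSet := hpy
  have hcolqr : c s(q, r) = i := by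
    have : s(q, r) ∈ {e ∈ H.edgeSet | c e = i} := by rw [hcls]; simp
    exact this.2
  have hcolrp : c s(r, p) = i := by
    have : s(r, p) ∈ {e ∈ H.edgeSet | c e = i} := by rw [hcls]; simp
    exact this.2
  have hia : i ≠ a := by
    intro h
    have hmem : s(p, y) ∈ {e ∈ H.edgeSet | c e = i} := ⟨hpye, h.symm⟩
    rw [hcls] at hmem
    simp only [Set.mem_insert_iff, Set.mem_singleton_iff, Sym2.eq_iff] at hmem
    rcases hmem with (⟨-, h0⟩ | ⟨h0, -⟩) | (⟨h0, -⟩ | ⟨h0, -⟩) | (⟨h0, -⟩ | ⟨-, h0⟩)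
    · exact hqy h0.symm
    · exact hpq.ne h0
    · exact hpq.ne h0
    · exact hrp.ne h0.symm
    · exact hrp.ne h0.symm
    · exact hry h0.symm
  have hi1 : 1 ≤ i := (hc.1 _ hpe).1
  have hi2 : i ≤ m := (hc.1 _ hpe).2
  have ha1 : 1 ≤ a := (hc.1 _ hpye).1
  have ha2 : a ≤ m := (hc.1 _ hpye).2
  have hane : ({e ∈ H.edgeSet | c e = a}).Nonempty := ⟨s(p, y), hpye, rfl⟩
  have hacyc := hc.2 a hane
  obtain ⟨hyA, P, hcyc, hAeq⟩ := anchor hacyc (show s(p, y) ∈ {e ∈ H.edgeSet | c e = a} from ⟨hpye, rfl⟩)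
  have hPp : P.IsPath := ((Walk.cons_isCycle_iff P hyA).mp hcyc).1
  have hPAcol : ∀ e ∈ P.edges, c e = a := by
    intro e he
    have : e ∈ {e ∈ H.edgeSet | c e = a} := by
      rw [hAeq]; exact List.mem_cons_of_mem _ he
    exact this.2
  have hnotP : ∀ e ∈ ({s(p, q), s(q, r), s(r, p)} : Set (Sym2 V)), e ∉ P.edges := by
    intro e he hP
    have hcole : c e = i := by
      rw [← hcls] at he; exact he.2
    exact hia (hcole.symm.trans (hPAcol e hP))
  have hT1 : s(p, q) ∉ P.edges := hnotP _ (by simp)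
  have hT2 : s(q, r) ∉ P.edges := hnotP _ (by simp)
  have hT3 : s(r, p) ∉ P.edges := hnotP _ (by simp)
  have hT1' : s(q, p) ∉ P.edges := by rw [Sym2.eq_swap]; exact hT1
  have hT2' : s(r, q) ∉ P.edges := by rw [Sym2.eq_swap]; exact hT2
  have hT3' : s(p, r) ∉ P.edges := by rw [Sym2.eq_swap]; exact hT3
  have hqP : q ∈ P.support := by
    obtain ⟨e, heA, hqe⟩ := hq
    rw [hAeq] at heA
    have := mem_supp (p := Walk.cons hyA P) heA hqe
    rw [support_cons, List.mem_cons] at this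
    rcases this with h0 | h0
    · exact absurd h0 hqy
    · exact h0
  by_cases hrtake : r ∈ (P.takeUntil q hqP).support
  · -- use the configuration (p, r, q)
    have hrP : r ∈ P.support := (P.support_takeUntil_subset hqP) hrtake
    have hqtake : q ∉ (P.takeUntil r hrP).support :=
      take_comm P hPp.support_nodup hqP hrP hrtake hqr.ne.symm
    obtain ⟨F1, F2, hF1, hF2, hdisj, hun, hmem1, hmem2⟩ :=
      split hyA P hcyc hrp.symm hqr.symm hpq.symm hry hqy hT3' hT2' hT1' hrP hqtake
    have hun' : F1 ∪ F2 = {e ∈ H.edgeSet | c e = i} ∪ {e ∈ H.edgeSet | c e = a} := by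
      rw [hun, hcls, ← hAeq]
      rw [Set.union_comm]
      congr 1
      ext e
      simp only [Set.mem_insert_iff, Set.mem_singleton_iff,
        Sym2.eq_swap (a := p) (b := r), Sym2.eq_swap (a := r) (b := q),
        Sym2.eq_swap (a := q) (b := p)]
      tauto
    set c' : Sym2 V → ℕ := fun e => if e ∈ F1 then i else if e ∈ F2 then a else c e with hc'def
    refine ⟨c', recolour2 hc hia hi1 hi2 ha1 ha2 hF1 hF2 hdisj hun', ?_⟩
    rintro ⟨-, g⟩
    have v1 : c' s(r, p) = i := by
      show (if s(r, p) ∈ F1 then i else if s(r, p) ∈ F2 then a else c s(r, p)) = i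
      rw [Sym2.eq_swap, if_pos hmem1]
    have v2 : c' s(q, r) = a := by
      show (if s(q, r) ∈ F1 then i else if s(q, r) ∈ F2 then a else c s(q, r)) = a
      rw [Sym2.eq_swap, if_neg (fun h => hdisj.ne_of_mem h hmem2 rfl), if_pos hmem2]
    rw [v1, v2] at g
    exact hia g.symm
  · obtain ⟨F1, F2, hF1, hF2, hdisj, hun, hmem1, hmem2⟩ :=
      split hyA P hcyc hpq hqr hrp hqy hry hT1 hT2 hT3 hqP hrtake
    have hun' : F1 ∪ F2 = {e ∈ H.edgeSet | c e = i} ∪ {e ∈ H.edgeSet | c e = a} := by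
      rw [hun, hcls, ← hAeq, Set.union_comm]
    set c' : Sym2 V → ℕ := fun e => if e ∈ F1 then i else if e ∈ F2 then a else c e with hc'def
    refine ⟨c', recolour2 hc hia hi1 hi2 ha1 ha2 hF1 hF2 hdisj hun', ?_⟩
    rintro ⟨g, -⟩
    have v1 : c' s(p, q) = i := by
      show (if s(p, q) ∈ F1 then i else if s(p, q) ∈ F2 then a else c s(p, q)) = i
      rw [if_pos hmem1]
    have v2 : c' s(q, r) = a := by
      show (if s(q, r) ∈ F1 then i else if s(q, r) ∈ F2 then a else c s(q, r)) = a
      rw [if_neg (fun h => hdisj.ne_of_mem h hmem2 rfl), if_pos hmem2]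
    rw [v1, v2] at g
    exact hia g

set_option maxHeartbeats 2000000 in
open scoped Classical in
lemma main_rotate {c : Sym2 V → ℕ} {m : ℕ} (hc : IsLegalColouringWith H c m)
    {x1 x2 x3 y : V}
    (h12 : H.Adj x1 x2) (h13 : H.Adj x1 x3) (h1y : H.Adj x1 y)
    (h23 : H.Adj x2 x3) (h2y : H.Adj x2 y) (h3y : H.Adj x3 y)
    (hcls : {e ∈ H.edgeSet | c e = c s(x1, x2)} = {s(x1, x2), s(x2, x3), s(x3, x1)})
    (nA2 : ¬∃ e ∈ {e ∈ H.edgeSet | c e = c s(x1, y)}, x2 ∈ e)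
    (nA3 : ¬∃ e ∈ {e ∈ H.edgeSet | c e = c s(x1, y)}, x3 ∈ e)
    (nB3 : ¬∃ e ∈ {e ∈ H.edgeSet | c e = c s(x2, y)}, x3 ∈ e)
    (nD1 : ¬∃ e ∈ {e ∈ H.edgeSet | c e = c s(x3, y)}, x1 ∈ e) :
    ∃ c', IsLegalColouringWith H c' m ∧
      ¬(c' s(x1, x2) = c' s(x2, x3) ∧ c' s(x2, x3) = c' s(x3, x1)) := by
  set i := c s(x1, x2) with hidef
  set a := c s(x1, y) with hadef
  set b := c s(x2, y) with hbdef
  set d := c s(x3, y) with hddef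
  have e12 : s(x1, x2) ∈ H.edgeSet := h12
  have eA : s(x1, y) ∈ H.edgeSet := h1y
  have eB : s(x2, y) ∈ H.edgeSet := h2y
  have eD : s(x3, y) ∈ H.edgeSet := h3y
  have d12 : x1 ≠ x2 := h12.ne
  have d13 : x1 ≠ x3 := h13.ne
  have d23 : x2 ≠ x3 := h23.ne
  have d1y : x1 ≠ y := h1y.ne
  have d2y : x2 ≠ y := h2y.ne
  have d3y : x3 ≠ y := h3y.ne
  have hcol23 : c s(x2, x3) = i := by
    have : s(x2, x3) ∈ {e ∈ H.edgeSet | c e = i} := by rw [hcls]; simp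
    exact this.2
  have hcol31 : c s(x3, x1) = i := by
    have : s(x3, x1) ∈ {e ∈ H.edgeSet | c e = i} := by rw [hcls]; simp
    exact this.2
  have hTnoty : ∀ z : V, z ≠ x1 → z ≠ x2 → z ≠ x3 → ∀ w : V, c s(w, z) = i →
      s(w, z) ∈ H.edgeSet → False := by
    intro z hz1 hz2 hz3 w hcol hmem
    have h0 : s(w, z) ∈ {e ∈ H.edgeSet | c e = i} := ⟨hmem, hcol⟩
    rw [hcls] at h0
    simp only [Set.mem_insert_iff, Set.mem_singleton_iff, Sym2.eq_iff] at h0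
    rcases h0 with (⟨-, h0⟩ | ⟨-, h0⟩) | (⟨-, h0⟩ | ⟨-, h0⟩) | (⟨-, h0⟩ | ⟨-, h0⟩)
    · exact hz2 h0
    · exact hz1 h0
    · exact hz3 h0
    · exact hz2 h0
    · exact hz1 h0
    · exact hz3 h0
  have hia : i ≠ a := fun h => hTnoty y d1y.symm d2y.symm d3y.symm x1 h.symm eA
  have hib : i ≠ b := fun h => hTnoty y d1y.symm d2y.symm d3y.symm x2 h.symm eB
  have hid : i ≠ d := fun h => hTnoty y d1y.symm d2y.symm d3y.symm x3 h.symm eD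
  have hab : a ≠ b := by
    intro h
    exact nA2 ⟨s(x2, y), ⟨eB, h.symm⟩, by simp⟩
  have had : a ≠ d := by
    intro h
    exact nA3 ⟨s(x3, y), ⟨eD, h.symm⟩, by simp⟩
  have hbd : b ≠ d := by
    intro h
    exact nB3 ⟨s(x3, y), ⟨eD, h.symm⟩, by simp⟩
  obtain ⟨hyA, PA, hcycA, hAeq⟩ :=
    anchor (hc.2 a ⟨s(x1, y), eA, rfl⟩) (show s(x1, y) ∈ {e ∈ H.edgeSet | c e = a} from ⟨eA, rfl⟩)
  obtain ⟨hyB, PB, hcycB, hBeq⟩ :=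
    anchor (hc.2 b ⟨s(x2, y), eB, rfl⟩) (show s(x2, y) ∈ {e ∈ H.edgeSet | c e = b} from ⟨eB, rfl⟩)
  obtain ⟨hyD, PD, hcycD, hDeq⟩ :=
    anchor (hc.2 d ⟨s(x3, y), eD, rfl⟩) (show s(x3, y) ∈ {e ∈ H.edgeSet | c e = d} from ⟨eD, rfl⟩)
  have hPAcol : ∀ e ∈ PA.edges, c e = a := fun e he =>
    (show e ∈ {e ∈ H.edgeSet | c e = a} by rw [hAeq]; exact List.mem_cons_of_mem _ he).2
  have hPBcol : ∀ e ∈ PB.edges, c e = b := fun e he =>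
    (show e ∈ {e ∈ H.edgeSet | c e = b} by rw [hBeq]; exact List.mem_cons_of_mem _ he).2
  have hPDcol : ∀ e ∈ PD.edges, c e = d := fun e he =>
    (show e ∈ {e ∈ H.edgeSet | c e = d} by rw [hDeq]; exact List.mem_cons_of_mem _ he).2
  have sA : s(y, x1) ∉ PA.edges := ((Walk.cons_isCycle_iff PA hyA).mp hcycA).2
  have sB : s(y, x2) ∉ PB.edges := ((Walk.cons_isCycle_iff PB hyB).mp hcycB).2
  have sD : s(y, x3) ∉ PD.edges := ((Walk.cons_isCycle_iff PD hyD).mp hcycD).2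
  have hx2PA : x2 ∉ PA.support := by
    intro h
    obtain ⟨e, he, hxe⟩ := mem_edge_of_mem_support PA (Walk.not_nil_of_ne d1y) h
    exact nA2 ⟨e, by rw [hAeq]; exact List.mem_cons_of_mem _ he, hxe⟩
  have hx3PB : x3 ∉ PB.support := by
    intro h
    obtain ⟨e, he, hxe⟩ := mem_edge_of_mem_support PB (Walk.not_nil_of_ne d2y) h
    exact nB3 ⟨e, by rw [hBeq]; exact List.mem_cons_of_mem _ he, hxe⟩
  have hx1PD : x1 ∉ PD.support := by
    intro h
    obtain ⟨e, he, hxe⟩ := mem_edge_of_mem_support PD (Walk.not_nil_of_ne d3y) h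
    exact nD1 ⟨e, by rw [hDeq]; exact List.mem_cons_of_mem _ he, hxe⟩
  obtain ⟨F1, hF1cyc, hmem1⟩ := rotateCycle hyA PA hcycA h12 h2y hx2PA
  obtain ⟨F2, hF2cyc, hmem2⟩ := rotateCycle hyB PB hcycB h23 h3y hx3PB
  obtain ⟨F3, hF3cyc, hmem3⟩ := rotateCycle hyD PD hcycD h13.symm h1y hx1PD
  have hcolPA : ∀ {e}, e ∈ PA.edges → ∀ {j : ℕ}, c e = j → a = j := by
    intro e he j hj; rw [← hj, hPAcol e he]
  have hD12 : Disjoint F1 F2 := by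
    rw [Set.disjoint_left]
    intro e he1 he2
    rw [hmem1] at he1
    rw [hmem2] at he2
    rcases he1 with rfl | rfl | he1 <;> rcases he2 with h | h | h
    · rw [Sym2.eq_iff] at h
      rcases h with ⟨h, -⟩ | ⟨h, -⟩
      · exact d12 h
      · exact d13 h
    · rw [Sym2.eq_iff] at h
      rcases h with ⟨h, -⟩ | ⟨h, -⟩
      · exact d13 h
      · exact d1y h
    · exact hib (hPBcol _ h)
    · rw [Sym2.eq_iff] at h
      rcases h with ⟨-, h⟩ | ⟨h, -⟩
      · exact d3y h.symm
      · exact d23 h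
    · rw [Sym2.eq_iff] at h
      rcases h with ⟨h, -⟩ | ⟨h, -⟩
      · exact d23 h
      · exact d2y h
    · exact sB (by rwa [Sym2.eq_swap] at h)
    · have h0 := hPAcol _ he1
      rw [h, hcol23] at h0
      exact hia h0
    · have h0 := hPAcol _ he1
      rw [h, ← hddef] at h0
      exact had h0.symm
    · exact hab ((hPAcol _ he1).symm.trans (hPBcol _ h))
  have hD13 : Disjoint F1 F3 := by
    rw [Set.disjoint_left]
    intro e he1 he3
    rw [hmem1] at he1
    rw [hmem3] at he3
    rcases he1 with rfl | rfl | he1 <;> rcases he3 with h | h | h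
    · rw [Sym2.eq_iff] at h
      rcases h with ⟨h, -⟩ | ⟨-, h⟩
      · exact d13 h
      · exact d23 h
    · rw [Sym2.eq_iff] at h
      rcases h with ⟨-, h⟩ | ⟨h, -⟩
      · exact d2y h
      · exact d1y h
    · exact hid (hPDcol _ h)
    · rw [Sym2.eq_iff] at h
      rcases h with ⟨h, -⟩ | ⟨h, -⟩
      · exact d23 h
      · exact d12 h.symm
    · rw [Sym2.eq_iff] at h
      rcases h with ⟨h, -⟩ | ⟨h, -⟩
      · exact d12 h.symm
      · exact d2y h
    · exact hbd (hPDcol _ h)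
    · have h0 := hPAcol _ he1
      rw [h, hcol31] at h0
      exact hia h0
    · refine sA ?_
      rw [Sym2.eq_swap]
      exact h ▸ he1
    · exact had ((hPAcol _ he1).symm.trans (hPDcol _ h))
  have hD23 : Disjoint F2 F3 := by
    rw [Set.disjoint_left]
    intro e he2 he3
    rw [hmem2] at he2
    rw [hmem3] at he3
    rcases he2 with rfl | rfl | he2 <;> rcases he3 with h | h | h
    · rw [Sym2.eq_iff] at h
      rcases h with ⟨h, -⟩ | ⟨h, -⟩
      · exact d23 h
      · exact d12 h.symm
    · rw [Sym2.eq_iff] at h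
      rcases h with ⟨h, -⟩ | ⟨-, h⟩
      · exact d12 h.symm
      · exact d13 h.symm
    · have h0 := hPDcol _ h
      rw [hcol23] at h0
      exact hid h0
    · rw [Sym2.eq_iff] at h
      rcases h with ⟨-, h⟩ | ⟨h, -⟩
      · exact d1y h.symm
      · exact d13 h.symm
    · rw [Sym2.eq_iff] at h
      rcases h with ⟨h, -⟩ | ⟨h, -⟩
      · exact d13 h.symm
      · exact d3y h
    · refine sD ?_
      rw [Sym2.eq_swap]
      exact h
    · have h0 := hPBcol _ he2
      rw [h, hcol31] at h0
      exact hib h0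
    · have h0 := hPBcol _ he2
      rw [h, ← hadef] at h0
      exact hab h0
    · exact hbd ((hPBcol _ he2).symm.trans (hPDcol _ h))
  have ha1 : 1 ≤ a := (hc.1 _ eA).1
  have ha2 : a ≤ m := (hc.1 _ eA).2
  have hb1 : 1 ≤ b := (hc.1 _ eB).1
  have hb2 : b ≤ m := (hc.1 _ eB).2
  have hd1 : 1 ≤ d := (hc.1 _ eD).1
  have hd2 : d ≤ m := (hc.1 _ eD).2
  have hun : F1 ∪ F2 ∪ F3 = {e ∈ H.edgeSet | c e = a} ∪ {e ∈ H.edgeSet | c e = b} ∪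
      {e ∈ H.edgeSet | c e = d} ∪ {e ∈ H.edgeSet | c e = i} := by
    rw [hAeq, hBeq, hDeq, hcls]
    ext e
    simp only [Set.mem_union, Set.mem_setOf_eq, edges_cons, List.mem_cons, Set.mem_insert_iff,
      Set.mem_singleton_iff, hmem1, hmem2, hmem3]
    rw [Sym2.eq_swap (a := y) (b := x1), Sym2.eq_swap (a := y) (b := x2),
      Sym2.eq_swap (a := y) (b := x3)]
    tauto
  set c' : Sym2 V → ℕ :=
    fun e => if e ∈ F1 then a else if e ∈ F2 then b else if e ∈ F3 then d else c e with hc'def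
  refine ⟨c', recolour3 hc hia hib hid hab had hbd ha1 ha2 hb1 hb2 hd1 hd2
    hF1cyc hF2cyc hF3cyc hD12 hD13 hD23 hun, ?_⟩
  rintro ⟨g, -⟩
  have hm1' : s(x1, x2) ∈ F1 := (hmem1 _).mpr (Or.inl rfl)
  have hm2' : s(x2, x3) ∈ F2 := (hmem2 _).mpr (Or.inl rfl)
  have v1 : c' s(x1, x2) = a := by
    show (if s(x1, x2) ∈ F1 then a else if s(x1, x2) ∈ F2 then b
      else if s(x1, x2) ∈ F3 then d else c s(x1, x2)) = a
    rw [if_pos hm1']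
  have v2 : c' s(x2, x3) = b := by
    show (if s(x2, x3) ∈ F1 then a else if s(x2, x3) ∈ F2 then b
      else if s(x2, x3) ∈ F3 then d else c s(x2, x3)) = b
    rw [if_neg (fun h => (hD12.ne_of_mem h hm2') rfl), if_pos hm2']
  rw [v1, v2] at g
  exact hab g

end Helpers

theorem stmt_7 {V : Type*} [Fintype V] (H : SimpleGraph V) (c : Sym2 V → ℕ)
    (x1 x2 x3 y : V) (hc : IsLegalColouring H c)
    (h12 : H.Adj x1 x2) (h13 : H.Adj x1 x3) (h1y : H.Adj x1 y)
    (h23 : H.Adj x2 x3) (h2y : H.Adj x2 y) (h3y : H.Adj x3 y) :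
    ∃ c' : Sym2 V → ℕ, IsLegalColouring H c' ∧
      ¬ (c' s(x1, x2) = c' s(x2, x3) ∧ c' s(x2, x3) = c' s(x3, x1)) := by
  classical
  by_cases hmono : c s(x1, x2) = c s(x2, x3) ∧ c s(x2, x3) = c s(x3, x1)
  swap
  · exact ⟨c, hc, hmono⟩
  obtain ⟨hm1, hm2⟩ := hmono
  have hc0 : IsLegalColouringWith H c ((Fintype.card V - 1) / 2) := hc
  have d12 : x1 ≠ x2 := h12.ne
  have d13 : x1 ≠ x3 := h13.ne
  have d23 : x2 ≠ x3 := h23.ne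
  have d1y : x1 ≠ y := h1y.ne
  have d2y : x2 ≠ y := h2y.ne
  have d3y : x3 ≠ y := h3y.ne
  have e12 : s(x1, x2) ∈ H.edgeSet := h12
  have e23 : s(x2, x3) ∈ H.edgeSet := h23
  have e31 : s(x3, x1) ∈ H.edgeSet := h13.symm
  have hT : {e ∈ H.edgeSet | c e = c s(x1, x2)} = {s(x1, x2), s(x2, x3), s(x3, x1)} :=
    triangle_cycle (hc0.2 _ ⟨s(x1, x2), e12, rfl⟩) d12 d13 d23 ⟨e12, rfl⟩ ⟨e23, hm1.symm⟩
      ⟨e31, (hm1.trans hm2).symm⟩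
  have E13 : c s(x1, x3) = c s(x1, x2) := by
    rw [Sym2.eq_swap]; exact (hm1.trans hm2).symm
  have E23 : c s(x2, x3) = c s(x1, x2) := hm1.symm
  have E31 : c s(x3, x1) = c s(x1, x2) := (hm1.trans hm2).symm
  have hcls13 : {e ∈ H.edgeSet | c e = c s(x1, x3)} = {s(x1, x3), s(x3, x2), s(x2, x1)} := by
    rw [E13, hT]
    ext e
    simp only [Set.mem_insert_iff, Set.mem_singleton_iff, Sym2.eq_swap (a := x1) (b := x3),
      Sym2.eq_swap (a := x3) (b := x2), Sym2.eq_swap (a := x2) (b := x1)]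
    tauto
  have hcls23 : {e ∈ H.edgeSet | c e = c s(x2, x3)} = {s(x2, x3), s(x3, x1), s(x1, x2)} := by
    rw [E23, hT]
    ext e
    simp only [Set.mem_insert_iff, Set.mem_singleton_iff]
    tauto
  have hcls31 : {e ∈ H.edgeSet | c e = c s(x3, x1)} = {s(x3, x1), s(x1, x2), s(x2, x3)} := by
    rw [E31, hT]
    ext e
    simp only [Set.mem_insert_iff, Set.mem_singleton_iff]
    tauto
  by_cases hA2 : ∃ e ∈ {e ∈ H.edgeSet | c e = c s(x1, y)}, x2 ∈ e
  · obtain ⟨c', hcl, hnm⟩ := main_split hc0 h12 h23 h13.symm h1y d2y d3y hT hA2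
    exact ⟨c', hcl, hnm⟩
  by_cases hA3 : ∃ e ∈ {e ∈ H.edgeSet | c e = c s(x1, y)}, x3 ∈ e
  · obtain ⟨c', hcl, hnm⟩ := main_split hc0 h13 h23.symm h12.symm h1y d3y d2y hcls13 hA3
    refine ⟨c', hcl, fun hg => hnm ?_⟩
    obtain ⟨g1, g2⟩ := hg
    constructor
    · rw [Sym2.eq_swap (a := x1) (b := x3), Sym2.eq_swap (a := x3) (b := x2)]
      exact g2.symm
    · rw [Sym2.eq_swap (a := x3) (b := x2), Sym2.eq_swap (a := x2) (b := x1)]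
      exact g1.symm
  by_cases hB3 : ∃ e ∈ {e ∈ H.edgeSet | c e = c s(x2, y)}, x3 ∈ e
  · obtain ⟨c', hcl, hnm⟩ := main_split hc0 h23 h13.symm h12 h2y d3y d1y hcls23 hB3
    refine ⟨c', hcl, fun hg => hnm ?_⟩
    obtain ⟨g1, g2⟩ := hg
    exact ⟨g2, (g1.trans g2).symm⟩
  by_cases hD1 : ∃ e ∈ {e ∈ H.edgeSet | c e = c s(x3, y)}, x1 ∈ e
  · obtain ⟨c', hcl, hnm⟩ := main_split hc0 h13.symm h12 h23 h3y d1y d2y hcls31 hD1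
    refine ⟨c', hcl, fun hg => hnm ?_⟩
    obtain ⟨g1, g2⟩ := hg
    exact ⟨(g1.trans g2).symm, g1⟩
  · obtain ⟨c', hcl, hnm⟩ := main_rotate hc0 h12 h13 h1y h23 h2y h3y hT hA2 hA3 hB3 hD1
    exact ⟨c', hcl, hnm⟩
end

section
/- If x is a vertex of degree at least 3 in a simple graph H that admits a legal colouring, then either the neighbourhood N(x) contains an independent set of size 3, or the induced subgraph H[{x} ∪ N(x)] contains a path of length 3 that is not monochromatic. -/
open SimpleGraph

lemma path_end_edge_unique {V : Type*} {G : SimpleGraph V} {u v : V} (p : G.Walk u v)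
    (hp : p.IsPath) : ∀ e₁ ∈ p.edges, ∀ e₂ ∈ p.edges, v ∈ e₁ → v ∈ e₂ → e₁ = e₂ := by
  induction p with
  | nil => simp
  | @cons a b c h q ih =>
    rw [Walk.cons_isPath_iff] at hp
    intro e₁ he₁ e₂ he₂ hv₁ hv₂
    rw [Walk.edges_cons, List.mem_cons] at he₁ he₂
    have key : ∀ e, e = s(a, b) → c ∈ e → q.edges = [] ∧ e = s(a, c) := by
      intro e he hve
      subst he
      rw [Sym2.mem_iff] at hve
      rcases hve with rfl | rfl
      · exact absurd q.end_mem_support hp.2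
      · exact ⟨by simp [(Walk.isPath_iff_eq_nil (p := q)).mp hp.1], rfl⟩
    rcases he₁ with he₁ | he₁
    · obtain ⟨hq, rfl⟩ := key _ he₁ hv₁
      rcases he₂ with he₂ | he₂
      · obtain ⟨_, h2⟩ := key _ he₂ hv₂; rw [h2]
      · simp [hq] at he₂
    · rcases he₂ with he₂ | he₂
      · obtain ⟨hq, _⟩ := key _ he₂ hv₂; simp [hq] at he₁
      · exact ih hp.1 e₁ he₁ e₂ he₂ hv₁ hv₂

lemma cycle_at_vertex {V : Type*} {G : SimpleGraph V} {x : V} (w : G.Walk x x)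
    (hw : w.IsCycle) {e₁ e₂ e₃ : Sym2 V}
    (h1 : e₁ ∈ w.edges) (h2 : e₂ ∈ w.edges) (h3 : e₃ ∈ w.edges)
    (hx1 : x ∈ e₁) (hx2 : x ∈ e₂) (hx3 : x ∈ e₃)
    (h12 : e₁ ≠ e₂) (h13 : e₁ ≠ e₃) (h23 : e₂ ≠ e₃) : False := by
  cases w with
  | nil => exact Walk.IsCycle.not_of_nil hw
  | @cons _ b _ h q =>
    rw [Walk.cons_isCycle_iff] at hw
    rw [Walk.edges_cons, List.mem_cons] at h1 h2 h3
    have key := path_end_edge_unique q hw.1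
    rcases h1 with rfl | h1
    · rcases h2 with rfl | h2
      · exact h12 rfl
      rcases h3 with rfl | h3
      · exact h13 rfl
      exact h23 (key _ h2 _ h3 hx2 hx3)
    · rcases h2 with rfl | h2
      · rcases h3 with rfl | h3
        · exact h23 rfl
        exact h13 (key _ h1 _ h3 hx1 hx3)
      · exact h12 (key _ h1 _ h2 hx1 hx2)

lemma cycle_edges_at_vertex {V : Type*} {G : SimpleGraph V} {v : V} (w : G.Walk v v)
    (hw : w.IsCycle) {x : V} {e₁ e₂ e₃ : Sym2 V}
    (h1 : e₁ ∈ w.edges) (h2 : e₂ ∈ w.edges) (h3 : e₃ ∈ w.edges)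
    (hx1 : x ∈ e₁) (hx2 : x ∈ e₂) (hx3 : x ∈ e₃)
    (h12 : e₁ ≠ e₂) (h13 : e₁ ≠ e₃) (h23 : e₂ ≠ e₃) : False := by
  classical
  have hxs : x ∈ w.support := by
    have hs := Sym2.other_spec hx1
    exact w.fst_mem_support_of_mem_edges (by rw [hs]; exact h1)
  have hperm : ∀ {e : Sym2 V}, e ∈ w.edges → e ∈ (w.rotate x hxs).edges := fun he =>
    (w.rotate_edges x hxs).mem_iff.mpr he
  exact cycle_at_vertex (w.rotate x hxs) (hw.rotate hxs)
    (hperm h1) (hperm h2) (hperm h3) hx1 hx2 hx3 h12 h13 h23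

lemma key_path {V : Type*} [Fintype V] (H : SimpleGraph V) (c : Sym2 V → ℕ)
    (x u v w : V) (hc : IsLegalColouring H c)
    (hu : H.Adj x u) (hv : H.Adj x v) (hw : H.Adj x w)
    (huv : u ≠ v) (huw : u ≠ w) (hvw : v ≠ w) (hadj : H.Adj u v) :
    (∃ p1 p2 p3 p4 : V,
      p1 ∈ insert x (H.neighborSet x) ∧ p2 ∈ insert x (H.neighborSet x) ∧
      p3 ∈ insert x (H.neighborSet x) ∧ p4 ∈ insert x (H.neighborSet x) ∧
      p1 ≠ p2 ∧ p1 ≠ p3 ∧ p1 ≠ p4 ∧ p2 ≠ p3 ∧ p2 ≠ p4 ∧ p3 ≠ p4 ∧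
      H.Adj p1 p2 ∧ H.Adj p2 p3 ∧ H.Adj p3 p4 ∧
      ¬ (c s(p1, p2) = c s(p2, p3) ∧ c s(p2, p3) = c s(p3, p4))) := by
  have hmemu : u ∈ insert x (H.neighborSet x) := Set.mem_insert_of_mem _ hu
  have hmemv : v ∈ insert x (H.neighborSet x) := Set.mem_insert_of_mem _ hv
  have hmemw : w ∈ insert x (H.neighborSet x) := Set.mem_insert_of_mem _ hw
  have hmemx : x ∈ insert x (H.neighborSet x) := Set.mem_insert _ _
  by_cases hmono1 : c s(w, x) = c s(x, u) ∧ c s(x, u) = c s(u, v)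
  · by_cases hmono2 : c s(w, x) = c s(x, v) ∧ c s(x, v) = c s(v, u)
    · exfalso
      set i := c s(x, u) with hi
      have hcw : c s(x, w) = i := by rw [Sym2.eq_swap]; exact hmono1.1
      have hcv : c s(x, v) = i := by rw [← hmono2.1]; exact hmono1.1
      set S := {e ∈ H.edgeSet | c e = i} with hS
      have hSu : s(x, u) ∈ S := ⟨hu, rfl⟩
      have hSv : s(x, v) ∈ S := ⟨hv, hcv⟩
      have hSw : s(x, w) ∈ S := ⟨hw, hcw⟩
      obtain ⟨v0, wk, hwk, hEq⟩ := hc.2 i ⟨_, hSu⟩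
      rw [show S = {e | e ∈ wk.edges} from hS.trans hEq] at hSu hSv hSw
      refine cycle_edges_at_vertex wk hwk hSu hSv hSw
        (Sym2.mem_mk_left x u) (Sym2.mem_mk_left x v) (Sym2.mem_mk_left x w)
        ?_ ?_ ?_ <;> simp [Sym2.eq, Sym2.rel_iff', huv, huw, hvw,
          hu.ne, hv.ne, hw.ne, (hu.ne).symm, (hv.ne).symm, (hw.ne).symm]
    · exact ⟨w, x, v, u, hmemw, hmemx, hmemv, hmemu, hw.ne', hvw.symm, huw.symm,
        hv.ne, hu.ne, huv.symm, hw.symm, hv, hadj.symm, hmono2⟩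
  · exact ⟨w, x, u, v, hmemw, hmemx, hmemu, hmemv, hw.ne', huw.symm, hvw.symm,
        hu.ne, hv.ne, huv, hw.symm, hu, hadj, hmono1⟩

theorem stmt_8 {V : Type*} [Fintype V] (H : SimpleGraph V) (c : Sym2 V → ℕ) (x : V)
    (hc : IsLegalColouring H c) (hdeg : 3 ≤ (H.neighborSet x).ncard) :
    (∃ a b d : V, a ∈ H.neighborSet x ∧ b ∈ H.neighborSet x ∧ d ∈ H.neighborSet x ∧
      a ≠ b ∧ a ≠ d ∧ b ≠ d ∧ ¬H.Adj a b ∧ ¬H.Adj a d ∧ ¬H.Adj b d) ∨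
    (∃ p1 p2 p3 p4 : V,
      p1 ∈ insert x (H.neighborSet x) ∧ p2 ∈ insert x (H.neighborSet x) ∧
      p3 ∈ insert x (H.neighborSet x) ∧ p4 ∈ insert x (H.neighborSet x) ∧
      p1 ≠ p2 ∧ p1 ≠ p3 ∧ p1 ≠ p4 ∧ p2 ≠ p3 ∧ p2 ≠ p4 ∧ p3 ≠ p4 ∧
      H.Adj p1 p2 ∧ H.Adj p2 p3 ∧ H.Adj p3 p4 ∧
      ¬ (c s(p1, p2) = c s(p2, p3) ∧ c s(p2, p3) = c s(p3, p4))) := by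
  classical
  set N := H.neighborSet x with hN
  have hfin : N.Finite := Set.toFinite _
  obtain ⟨a, ha⟩ : N.Nonempty := Set.nonempty_of_ncard_ne_zero (by omega)
  obtain ⟨b, hb, hba⟩ := Set.exists_ne_of_one_lt_ncard (s := N) (by omega) a
  have hd3 : 1 ≤ (N \ {a, b}).ncard := by
    have h1 : (N \ {a, b}).ncard = N.ncard - ({a, b} : Set V).ncard :=
      Set.ncard_diff (by intro y hy; rcases hy with rfl | rfl; exacts [ha, hb])
    have h2 : ({a, b} : Set V).ncard ≤ 2 :=
      le_trans (Set.ncard_insert_le _ _) (by simp [Set.ncard_singleton])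
    omega
  obtain ⟨d, hd⟩ : (N \ {a, b}).Nonempty := Set.nonempty_of_ncard_ne_zero (by omega)
  obtain ⟨hdN, hdab⟩ := hd
  have hda : d ≠ a := fun h => hdab (by simp [h])
  have hdb : d ≠ b := fun h => hdab (by simp [h])
  have hxa : H.Adj x a := ha
  have hxb : H.Adj x b := hb
  have hxd : H.Adj x d := hdN
  by_cases hab : H.Adj a b
  · exact Or.inr (key_path H c x a b d hc hxa hxb hxd hba.symm hda.symm hdb.symm hab)
  by_cases had : H.Adj a d
  · exact Or.inr (key_path H c x a d b hc hxa hxd hxb hda.symm hba.symm hdb had)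
  by_cases hbd : H.Adj b d
  · exact Or.inr (key_path H c x b d a hc hxb hxd hxa hdb.symm hba hda hbd)
  · exact Or.inl ⟨a, b, d, ha, hb, hdN, hba.symm, hda.symm, hdb.symm, hab, had, hbd⟩
end

section
/- Let G be a simple Eulerian graph on an odd number n of vertices containing a vertex u of degree 2 with neighbours x1, x2. If x1x2 ∉ E(G) and G − u + x1x2 has a cycle decomposition with at most ⌊(n−2)/2⌋ cycles, then G has a cycle decomposition with at most ⌊(n−1)/2⌋ cycles. Likewise, if x1x2 ∈ E(G) and G − u − x1x2 has a cycle decomposition with at most ⌊(n−2)/2⌋ cycles, then G has a cycle decomposition with at most ⌊(n−1)/2⌋ cycles. -/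
open SimpleGraph

section AuxLemmas
open SimpleGraph Walk

variable {V : Type*}

lemma aux_not_mem_support {H : SimpleGraph V} {u a b : V}
    (hiso : ∀ v, ¬ H.Adj u v) (p : H.Walk a b) (hb : u ≠ b) : u ∉ p.support := by
  induction p with
  | nil => simpa using hb
  | cons h q ih =>
      simp only [support_cons, List.mem_cons]
      push_neg
      exact ⟨fun he => hiso _ (he ▸ h), ih hb⟩

lemma aux_exists_concat {H : SimpleGraph V} {w : V} :
    ∀ {a b : V} (q : H.Walk a b), q.support.Nodup → s(w, b) ∈ q.edges →
    ∃ (r : H.Walk a w) (h : H.Adj w b), q = r.concat h := by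
  intro a b q
  induction q with
  | nil => simp
  | @cons a d b h' q' ih =>
      intro hn he
      simp only [support_cons, List.nodup_cons] at hn
      rw [edges_cons, List.mem_cons] at he
      rcases he with he | he
      · have hab : a ≠ b := fun h => hn.1 (h ▸ q'.end_mem_support)
        rw [Sym2.eq_iff] at he
        rcases he with ⟨hw, hb⟩ | ⟨hw, hb⟩
        · subst hw
          subst hb
          have hq' : q' = Walk.nil :=
            Walk.isPath_iff_eq_nil.mp (Walk.IsPath.mk' hn.2)
          subst hq'
          exact ⟨Walk.nil, h', rfl⟩
        · exact absurd hb hab.symm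
      · obtain ⟨r, h, rfl⟩ := ih hn.2 he
        exact ⟨Walk.cons h' r, h, (concat_cons h' r h).symm⟩

lemma aux_cycle_split' {H : SimpleGraph V} {x1 x2 : V} (hx : x1 ≠ x2)
    {c : H.Walk x2 x2} (hc : c.IsCycle) (he : s(x1, x2) ∈ c.edges) :
    ∃ p : H.Walk x1 x2, p.IsPath ∧ s(x1, x2) ∉ p.edges ∧
      ∀ e, e ∈ c.edges ↔ e = s(x1, x2) ∨ e ∈ p.edges := by
  cases c with
  | nil => simp at he
  | @cons _ y _ h q =>
      rw [cons_isCycle_iff] at hc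
      obtain ⟨hq, hq2⟩ := hc
      rw [edges_cons, List.mem_cons] at he
      rcases he with he | he
      · have hy : y = x1 := by
          rw [Sym2.eq_iff] at he
          rcases he with ⟨h1, h2⟩ | ⟨h1, h2⟩
          · exact absurd h1 hx
          · exact h1.symm
        subst hy
        refine ⟨q, hq, ?_, ?_⟩
        · rwa [Sym2.eq_swap] at hq2
        · intro e
          rw [edges_cons, List.mem_cons, Sym2.eq_swap]
      · have hne : s(x2, y) ≠ s(x1, x2) := by
          intro heq
          rw [← heq] at he
          exact hq2 he
        obtain ⟨r, h2, rfl⟩ := aux_exists_concat q hq.support_nodup he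
        have hsupp : (r.concat h2).support = r.support ++ [x2] := by
          rw [support_concat]
        have hrn : r.support.Nodup ∧ x2 ∉ r.support := by
          have := hq.support_nodup
          rw [hsupp] at this
          constructor
          · exact this.of_append_left
          · intro hmem
            exact (List.disjoint_of_nodup_append this) hmem (by simp)
        have hredges : (r.concat h2).edges = r.edges ++ [s(x1, x2)] := by
          rw [edges_concat, List.concat_eq_append]
        have hnotr : s(x1, x2) ∉ r.edges := by
          have := hq.isTrail.edges_nodup
          rw [hredges] at this
          intro hmem
          exact (List.disjoint_of_nodup_append this) hmem (by simp)
        refine ⟨(Walk.cons h r).reverse, ?_, ?_, ?_⟩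
        · refine (Walk.IsPath.mk' ?_).reverse
          simp only [support_cons, List.nodup_cons]
          exact ⟨hrn.2, hrn.1⟩
        · rw [edges_reverse, List.mem_reverse, edges_cons, List.mem_cons]
          push_neg
          exact ⟨fun hh => hne hh.symm, hnotr⟩
        · intro e
          rw [edges_reverse, List.mem_reverse, edges_cons (G := H) h r,
            edges_cons, List.mem_cons, List.mem_cons, hredges, List.mem_append]
          simp only [List.mem_singleton]
          tauto

lemma aux_cycle_split [DecidableEq V] {H : SimpleGraph V} {v x1 x2 : V} (hx : x1 ≠ x2)
    {c : H.Walk v v} (hc : c.IsCycle) (he : s(x1, x2) ∈ c.edges) :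
    ∃ p : H.Walk x1 x2, p.IsPath ∧ s(x1, x2) ∉ p.edges ∧
      ∀ e, e ∈ c.edges ↔ e = s(x1, x2) ∨ e ∈ p.edges := by
  have hx2 : x2 ∈ c.support := c.snd_mem_support_of_mem_edges he
  have hperm := (c.rotate_edges x2 hx2).perm
  obtain ⟨p, h1, h2, h3⟩ := aux_cycle_split' hx (hc.rotate hx2)
    (hperm.mem_iff.mpr he)
  exact ⟨p, h1, h2, fun e => (hperm.mem_iff.symm.trans (h3 e))⟩

end AuxLemmas

open SimpleGraph.Walk

theorem stmt_9 {V : Type*} [Fintype V] (G : SimpleGraph V) (u x1 x2 : V)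
    (hEuler : ∀ v : V, Even ((G.neighborSet v).ncard))
    (hodd : Odd (Fintype.card V))
    (hx : x1 ≠ x2) (hN : G.neighborSet u = {x1, x2}) :
    ((¬ G.Adj x1 x2 →
      HasCycleDecompLE
        (SimpleGraph.fromEdgeSet ((G.edgeSet \ {s(u, x1), s(u, x2)}) ∪ {s(x1, x2)}))
        ((Fintype.card V - 2) / 2) →
      HasCycleDecompLE G ((Fintype.card V - 1) / 2))) ∧
    ((G.Adj x1 x2 →
      HasCycleDecompLE (G.deleteEdges {s(u, x1), s(u, x2), s(x1, x2)})
        ((Fintype.card V - 2) / 2) →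
      HasCycleDecompLE G ((Fintype.card V - 1) / 2))) := by
  classical
  have hux1 : G.Adj u x1 := by
    rw [← SimpleGraph.mem_neighborSet, hN]; left; rfl
  have hux2 : G.Adj u x2 := by
    rw [← SimpleGraph.mem_neighborSet, hN]; right; rfl
  have hu1 : u ≠ x1 := hux1.ne
  have hu2 : u ≠ x2 := hux2.ne
  have hnbr : ∀ v, G.Adj u v → v = x1 ∨ v = x2 := by
    intro v hv
    have : v ∈ G.neighborSet u := hv
    rw [hN] at this
    simpa using this
  have h3 : ({u, x1, x2} : Finset V).card = 3 := by
    rw [Finset.card_insert_of_notMem (by simp [hu1, hu2]),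
      Finset.card_insert_of_notMem (by simp [hx]), Finset.card_singleton]
  have hcard : 3 ≤ Fintype.card V := by
    have h := Finset.card_le_univ ({u, x1, x2} : Finset V)
    rwa [h3] at h
  constructor
  · -- CASE 1
    intro hna hdec
    obtain ⟨n, f, hn, hcyc, hdisj, hun⟩ := hdec
    set S : Set (Sym2 V) := (G.edgeSet \ {s(u, x1), s(u, x2)}) ∪ {s(x1, x2)} with hS
    set G' := SimpleGraph.fromEdgeSet S with hG'
    have hSnd : ∀ e ∈ S, ¬ e.IsDiag := by
      rintro e (⟨heG, -⟩ | he)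
      · exact G.not_isDiag_of_mem_edgeSet heG
      · rw [Set.mem_singleton_iff] at he; subst he; simpa using hx
    have hE' : G'.edgeSet = S := by
      rw [hG', edgeSet_fromEdgeSet]
      ext e
      simp only [Set.mem_diff, Set.mem_setOf_eq]
      exact ⟨fun h => h.1, fun h => ⟨h, hSnd e h⟩⟩
    have hiso : ∀ v, ¬ G'.Adj u v := by
      intro v hv
      rw [hG', fromEdgeSet_adj] at hv
      obtain ⟨hmem, hne⟩ := hv
      rcases hmem with ⟨heG, hnot⟩ | he
      · rcases hnbr v ((mem_edgeSet _).mp heG) with rfl | rfl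
        · exact hnot (by left; rfl)
        · exact hnot (by right; rfl)
      · rw [Set.mem_singleton_iff, Sym2.eq_iff] at he
        rcases he with ⟨hh, -⟩ | ⟨hh, -⟩
        · exact hu1 hh
        · exact hu2 hh
    have hfsub : ∀ j, f j ⊆ G'.edgeSet := fun j => hun ▸ Set.subset_iUnion f j
    have hx12E : s(x1, x2) ∈ (⋃ i, f i) := by
      rw [hun, hE']; right; rfl
    obtain ⟨i0, hi0⟩ : ∃ i, s(x1, x2) ∈ f i := by simpa using hx12E
    obtain ⟨v, w, hw, hfeq⟩ := hcyc i0
    have hew : s(x1, x2) ∈ w.edges := by rw [hfeq] at hi0; exact hi0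
    obtain ⟨p, hp, hpe, hmem⟩ := aux_cycle_split hx hw hew
    have hpG : ∀ e ∈ p.edges, e ∈ G.edgeSet := by
      intro e hep
      have heW : e ∈ f i0 := by rw [hfeq]; exact (hmem e).mpr (Or.inr hep)
      have heS := hfsub i0 heW
      rw [hE'] at heS
      rcases heS with ⟨heG, -⟩ | he
      · exact heG
      · rw [Set.mem_singleton_iff] at he; subst he; exact absurd hep hpe
    set p' := p.transfer G hpG with hp'def
    have hup : u ∉ p.support := aux_not_mem_support hiso p hu2
    set w0 : G.Walk x1 x1 := Walk.cons hux1.symm (Walk.cons hux2 p'.reverse) with hw0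
    have hw0c : w0.IsCycle := by
      rw [hw0, cons_isCycle_iff, cons_isPath_iff]
      refine ⟨⟨(hp.transfer hpG).reverse, ?_⟩, ?_⟩
      · rw [support_reverse, List.mem_reverse, support_transfer]
        exact hup
      · rw [edges_cons, List.mem_cons]
        push_neg
        constructor
        · intro heq
          rw [Sym2.eq_iff] at heq
          rcases heq with ⟨hh1, hh2⟩ | ⟨hh1, hh2⟩
          · exact hu1 hh1.symm
          · exact hx hh1
        · rw [edges_reverse, List.mem_reverse, edges_transfer]
          intro hmem'
          exact hup (p.snd_mem_support_of_mem_edges hmem')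
    have hw0e : ∀ e, e ∈ w0.edges ↔ e = s(u, x1) ∨ e = s(u, x2) ∨ e ∈ p.edges := by
      intro e
      rw [hw0, edges_cons, edges_cons, List.mem_cons, List.mem_cons,
        edges_reverse, List.mem_reverse, edges_transfer,
        show s(x1, u) = s(u, x1) from Sym2.eq_swap]
    have key : ∀ j, j ≠ i0 → Disjoint {e | e ∈ w0.edges} (f j) := by
      intro j hj
      rw [Set.disjoint_left]
      intro e hew0 hej
      rw [Set.mem_setOf_eq, hw0e] at hew0
      have hejG' := hfsub j hej
      rcases hew0 with rfl | rfl | hep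
      · rw [SimpleGraph.mem_edgeSet] at hejG'; exact hiso x1 hejG'
      · rw [SimpleGraph.mem_edgeSet] at hejG'; exact hiso x2 hejG'
      · have hei0 : e ∈ f i0 := by rw [hfeq]; exact (hmem e).mpr (Or.inr hep)
        exact Set.disjoint_left.mp (hdisj (Ne.symm hj)) hei0 hej
    refine ⟨n, fun i => if i = i0 then {e | e ∈ w0.edges} else f i,
      le_trans hn (Nat.div_le_div_right (by omega)), ?_, ?_, ?_⟩
    · intro i
      by_cases hii : i = i0
      · subst hii
        simp only [if_pos rfl]
        exact ⟨x1, w0, hw0c, rfl⟩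
      · simp only [if_neg hii]
        obtain ⟨v', w', hw', hfeq'⟩ := hcyc i
        have hsub : ∀ e ∈ w'.edges, e ∈ G.edgeSet := by
          intro e hew'
          have hefi : e ∈ f i := by rw [hfeq']; exact hew'
          have heG' := hfsub i hefi
          rw [hE'] at heG'
          rcases heG' with ⟨heG, -⟩ | heq
          · exact heG
          · rw [Set.mem_singleton_iff] at heq; subst heq
            exact absurd hi0 (Set.disjoint_left.mp (hdisj hii) hefi)
        refine ⟨v', w'.transfer G hsub, hw'.transfer hsub, ?_⟩
        rw [hfeq']
        ext e
        simp [edges_transfer]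
    · intro i j hij
      simp only
      by_cases hi : i = i0 <;> by_cases hj : j = i0
      · exact absurd (hi.trans hj.symm) hij
      · subst hi; rw [if_pos rfl, if_neg hj]; exact key j hj
      · subst hj; rw [if_neg hi, if_pos rfl]; exact (key i hi).symm
      · rw [if_neg hi, if_neg hj]; exact hdisj hij
    · ext e
      simp only [Set.mem_iUnion]
      constructor
      · rintro ⟨i, hei⟩
        by_cases hii : i = i0
        · subst hii
          rw [if_pos rfl, Set.mem_setOf_eq] at hei
          rcases (hw0e e).mp hei with rfl | rfl | hep
          · exact (mem_edgeSet _).mpr hux1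
          · exact (mem_edgeSet _).mpr hux2
          · exact hpG e hep
        · rw [if_neg hii] at hei
          have heS := hfsub i hei
          rw [hE'] at heS
          rcases heS with ⟨heG, -⟩ | heq
          · exact heG
          · rw [Set.mem_singleton_iff] at heq; subst heq
            exact absurd hi0 (Set.disjoint_left.mp (hdisj hii) hei)
      · intro heG
        by_cases h1 : e = s(u, x1)
        · exact ⟨i0, by rw [if_pos rfl]; exact (hw0e e).mpr (Or.inl h1)⟩
        by_cases h2 : e = s(u, x2)
        · exact ⟨i0, by rw [if_pos rfl]; exact (hw0e e).mpr (Or.inr (Or.inl h2))⟩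
        have heS : e ∈ G'.edgeSet := by
          rw [hE']; left; exact ⟨heG, by simp [h1, h2]⟩
        rw [← hun] at heS
        obtain ⟨j, hej⟩ := Set.mem_iUnion.mp heS
        by_cases hj : j = i0
        · subst hj
          have hewj : e ∈ w.edges := by rw [hfeq] at hej; exact hej
          rcases (hmem e).mp hewj with rfl | hep
          · exact absurd ((mem_edgeSet _).mp heG) hna
          · exact ⟨j, by rw [if_pos rfl]; exact (hw0e e).mpr (Or.inr (Or.inr hep))⟩
        · exact ⟨j, by rw [if_neg hj]; exact hej⟩
  · -- CASE 2
    intro hadj hdec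
    obtain ⟨n, f, hn, hcyc, hdisj, hun⟩ := hdec
    set D : Set (Sym2 V) := {s(u, x1), s(u, x2), s(x1, x2)} with hD
    have hED : (G.deleteEdges D).edgeSet = G.edgeSet \ D := edgeSet_deleteEdges D
    have hfsub : ∀ j, f j ⊆ (G.deleteEdges D).edgeSet :=
      fun j => hun ▸ Set.subset_iUnion f j
    set t : G.Walk u u := Walk.cons hux1 (Walk.cons hadj (Walk.cons hux2.symm Walk.nil)) with ht
    have hte : t.edges = [s(u, x1), s(x1, x2), s(x2, u)] := by
      simp [ht]
    have htc : t.IsCycle := by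
      rw [ht, cons_isCycle_iff]
      constructor
      · refine Walk.IsPath.mk' ?_
        simp only [support_cons, support_nil, List.nodup_cons, List.mem_cons,
          List.mem_singleton, List.not_mem_nil, not_false_iff, List.nodup_nil, and_true]
        refine ⟨?_, ?_⟩
        · push_neg
          exact ⟨hx, Ne.symm hu1, trivial⟩
        · simpa using Ne.symm hu2
      · simp only [edges_cons, edges_nil, List.mem_cons, List.not_mem_nil, or_false]
        push_neg
        constructor
        · intro heq; rw [Sym2.eq_iff] at heq
          rcases heq with ⟨hh1, -⟩ | ⟨hh1, hh2⟩
          · exact hu1 hh1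
          · exact hu2 hh1
        · intro heq; rw [Sym2.eq_iff] at heq
          rcases heq with ⟨hh1, hh2⟩ | ⟨hh1, hh2⟩
          · exact hu2 hh1
          · exact hx hh2
    have hTmemD : ∀ e ∈ t.edges, e ∈ D := by
      intro e het
      rw [hte] at het
      simp only [List.mem_cons, List.not_mem_nil, or_false] at het
      rcases het with rfl | rfl | rfl
      · left; rfl
      · right; right; rfl
      · right; left; exact Sym2.eq_swap
    have hTdisj : ∀ j, Disjoint {e | e ∈ t.edges} (f j) := by
      intro j
      rw [Set.disjoint_left]
      intro e het hej
      have := hfsub j hej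
      rw [hED] at this
      exact this.2 (hTmemD e het)
    obtain ⟨k, hk⟩ := hodd
    refine ⟨n + 1, fun i => Fin.lastCases {e | e ∈ t.edges} f i, by omega, ?_, ?_, ?_⟩
    · intro i
      rcases Fin.eq_castSucc_or_eq_last i with ⟨j, rfl⟩ | rfl
      · simp only [Fin.lastCases_castSucc]
        obtain ⟨v', w', hw', hfeq'⟩ := hcyc j
        have hsub : ∀ e ∈ w'.edges, e ∈ G.edgeSet := by
          intro e hew'
          have : e ∈ f j := by rw [hfeq']; exact hew'
          have := hfsub j this
          rw [hED] at this
          exact this.1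
        refine ⟨v', w'.transfer G hsub, hw'.transfer hsub, ?_⟩
        rw [hfeq']
        ext e
        simp [edges_transfer]
      · simp only [Fin.lastCases_last]
        exact ⟨u, t, htc, rfl⟩
    · intro i j hij
      rcases Fin.eq_castSucc_or_eq_last i with ⟨i', rfl⟩ | rfl <;>
        rcases Fin.eq_castSucc_or_eq_last j with ⟨j', rfl⟩ | rfl
      · simp only [Fin.lastCases_castSucc]
        exact hdisj (fun h => hij (by rw [h]))
      · simp only [Fin.lastCases_castSucc, Fin.lastCases_last]
        exact (hTdisj i').symm
      · simp only [Fin.lastCases_castSucc, Fin.lastCases_last]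
        exact hTdisj j'
      · exact absurd rfl hij
    · ext e
      simp only [Set.mem_iUnion]
      constructor
      · rintro ⟨i, hei⟩
        rcases Fin.eq_castSucc_or_eq_last i with ⟨j, rfl⟩ | rfl
        · simp only [Fin.lastCases_castSucc] at hei
          have := hfsub j hei
          rw [hED] at this
          exact this.1
        · simp only [Fin.lastCases_last, Set.mem_setOf_eq, hte] at hei
          simp only [List.mem_cons, List.not_mem_nil, or_false] at hei
          rcases hei with rfl | rfl | rfl
          · exact (mem_edgeSet _).mpr hux1
          · exact (mem_edgeSet _).mpr hadj
          · exact (mem_edgeSet _).mpr hux2.symm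
      · intro heG
        by_cases heD : e ∈ D
        · refine ⟨Fin.last n, ?_⟩
          simp only [Fin.lastCases_last, Set.mem_setOf_eq, hte, List.mem_cons,
            List.not_mem_nil, or_false]
          rw [hD] at heD
          simp only [Set.mem_insert_iff, Set.mem_singleton_iff] at heD
          rcases heD with rfl | rfl | rfl
          · exact Or.inl rfl
          · exact Or.inr (Or.inr Sym2.eq_swap)
          · exact Or.inr (Or.inl rfl)
        · have : e ∈ (G.deleteEdges D).edgeSet := by rw [hED]; exact ⟨heG, heD⟩
          rw [← hun] at this
          obtain ⟨j, hej⟩ := Set.mem_iUnion.mp this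
          exact ⟨j.castSucc, by simp only [Fin.lastCases_castSucc]; exact hej⟩
end

section
/- Let G be an Eulerian graph with a vertex v of degree 4 and neighbourhood N = {x1, x2, x3, x4} such that x1x2 ∈ E(G) and x3x4 ∉ E(G). If G − {vx3, vx4} + {x3x4} has a legal colouring, then G has a legal colouring. -/
open SimpleGraph

namespace CycleHelpers

variable {V : Type*} {G : SimpleGraph V}

open SimpleGraph.Walk

lemma exists_cons_of_edge_head {u t b : V} {p : G.Walk u t} (hp : p.IsPath)
    (he : s(u, b) ∈ p.edges) :
    ∃ (h : G.Adj u b) (r : G.Walk b t), p = Walk.cons h r := by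
  cases p with
  | nil => simp at he
  | @cons _ d _ h' r =>
    rw [edges_cons, List.mem_cons] at he
    rcases he with he | he
    · obtain rfl : b = d := Sym2.congr_right.mp he
      exact ⟨h', r, rfl⟩
    · exact absurd (r.fst_mem_support_of_mem_edges he)
        ((cons_isPath_iff h' r).mp hp).2

lemma exists_edge_of_mem_support {u t x : V} (p : G.Walk u t) (hx : x ∈ p.support)
    (hn : ¬ p.Nil) : ∃ e ∈ p.edges, x ∈ e := by
  induction p with
  | nil => simp at hn
  | @cons a d t h r ih =>
    rw [support_cons, List.mem_cons] at hx
    rcases hx with rfl | hx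
    · exact ⟨s(x, d), by simp, by simp⟩
    · by_cases hr : r.Nil
      · have hd : x = d := by
          cases r with
          | nil => simpa using hx
          | cons h' r' => simp at hr
        exact ⟨s(a, d), by simp, by simp [hd]⟩
      · obtain ⟨e, he, hxe⟩ := ih hx hr
        exact ⟨e, by simp [he], hxe⟩

lemma cycle_split_at {a b : V} {w : G.Walk a a} (hc : w.IsCycle)
    (he : s(a, b) ∈ w.edges) :
    ∃ p : G.Walk b a, p.IsPath ∧ s(a, b) ∉ p.edges ∧
      ∀ e, e ∈ w.edges ↔ e = s(a, b) ∨ e ∈ p.edges := by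
  have hab : a ≠ b := (w.adj_of_mem_edges he).ne
  cases w with
  | nil => exact absurd rfl hc.ne_nil
  | @cons _ d _ h q =>
    have hqnd : q.support.Nodup := by simpa using hc.support_nodup
    have hqp : q.IsPath := (isPath_def q).mpr hqnd
    have hnd : (Walk.cons h q).edges.Nodup := hc.edges_nodup
    rw [edges_cons, List.nodup_cons] at hnd
    rcases List.mem_cons.mp he with heq | hq
    · obtain rfl : b = d := Sym2.congr_right.mp heq
      exact ⟨q, hqp, hnd.1, fun e => by simp⟩
    · have hbd : b ≠ d := by
        rintro rfl
        exact hnd.1 hq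
      have hqr : q.reverse.IsPath := hqp.reverse
      have her : s(a, b) ∈ q.reverse.edges := by
        rw [edges_reverse, List.mem_reverse]; exact hq
      obtain ⟨hadj, r, hre⟩ := exists_cons_of_edge_head hqr her
      rw [hre] at hqr
      have hr : r.IsPath ∧ a ∉ r.support := (cons_isPath_iff _ _).mp hqr
      have hqrev : ∀ e, e ∈ q.edges ↔ e = s(a, b) ∨ e ∈ r.edges := by
        intro e
        rw [← List.mem_reverse, ← edges_reverse, hre, edges_cons, List.mem_cons]
      refine ⟨r.append (Walk.cons h.symm Walk.nil), ?_, ?_, ?_⟩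
      · rw [isPath_def, support_append]
        simp only [support_cons, support_nil, List.tail_cons]
        rw [List.nodup_append]
        exact ⟨hr.1.support_nodup, List.nodup_singleton a,
          fun x hx y hxa hxy => by subst hxy; rw [List.mem_singleton] at hxa; subst hxa; exact hr.2 hx⟩
      · rw [edges_append]
        simp only [edges_cons, edges_nil, List.mem_append, List.mem_cons,
          List.not_mem_nil, or_false, not_or]
        have h1 : s(a, b) ∉ r.edges := by
          have := hqr.edges_nodup
          rw [hre] at *
          simpa using (List.nodup_cons.mp (by simpa using hqr.edges_nodup)).1
        refine ⟨h1, ?_⟩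
        rw [Sym2.eq_iff]
        rintro (⟨h1', h2'⟩ | ⟨h1', h2'⟩)
        · exact hbd (h2'.trans h1')
        · exact hbd h2'
      · intro e
        rw [edges_cons, List.mem_cons, hqrev e, edges_append]
        simp only [edges_cons, edges_nil, List.mem_append, List.mem_cons,
          List.not_mem_nil, or_false]
        constructor
        · rintro (rfl | rfl | h') 
          · exact Or.inr (Or.inr (Sym2.eq_swap))
          · exact Or.inl rfl
          · exact Or.inr (Or.inl h')
        · rintro (rfl | h' | rfl)
          · exact Or.inr (Or.inl rfl)
          · exact Or.inr (Or.inr h')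
          · exact Or.inl (Sym2.eq_swap)

lemma cycle_split {a b u : V} {w : G.Walk u u} (hc : w.IsCycle)
    (he : s(a, b) ∈ w.edges) :
    ∃ p : G.Walk b a, p.IsPath ∧ s(a, b) ∉ p.edges ∧
      ∀ e, e ∈ w.edges ↔ e = s(a, b) ∨ e ∈ p.edges := by
  classical
  have ha : a ∈ w.support := w.fst_mem_support_of_mem_edges he
  have hmem : ∀ e, e ∈ (w.rotate a ha).edges ↔ e ∈ w.edges :=
    fun e => (w.rotate_edges a ha).mem_iff
  obtain ⟨p, h1, h2, h3⟩ := cycle_split_at (hc.rotate ha) ((hmem _).mpr he)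
  exact ⟨p, h1, h2, fun e => (hmem e).symm.trans (h3 e)⟩

lemma cycSet_transfer {G H : SimpleGraph V} {s : Set (Sym2 V)}
    (h : IsCycleEdgeSet G s) (hs : ∀ e ∈ s, e ∈ H.edgeSet) :
    IsCycleEdgeSet H s := by
  obtain ⟨u, w, hc, rfl⟩ := h
  refine ⟨u, w.transfer H (fun e he => hs e he), hc.transfer _, ?_⟩
  ext e
  simp [SimpleGraph.Walk.edges_transfer]

end CycleHelpers

open CycleHelpers SimpleGraph.Walk

theorem stmt_10 {V : Type*} [Fintype V] (G : SimpleGraph V) (v x1 x2 x3 x4 : V)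
    (hEuler : ∀ w : V, Even ((G.neighborSet w).ncard))
    (hne : x1 ≠ x2 ∧ x1 ≠ x3 ∧ x1 ≠ x4 ∧ x2 ≠ x3 ∧ x2 ≠ x4 ∧ x3 ≠ x4)
    (hN : G.neighborSet v = {x1, x2, x3, x4})
    (h12 : G.Adj x1 x2) (h34 : ¬ G.Adj x3 x4)
    (hcol : ∃ c : Sym2 V → ℕ,
      IsLegalColouring
        (SimpleGraph.fromEdgeSet ((G.edgeSet \ {s(v, x3), s(v, x4)}) ∪ {s(x3, x4)})) c) :
    ∃ c : Sym2 V → ℕ, IsLegalColouring G c := by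
  classical
  obtain ⟨hne12, hne13, hne14, hne23, hne24, hne34⟩ := hne
  set S : Set (Sym2 V) := (G.edgeSet \ {s(v, x3), s(v, x4)}) ∪ {s(x3, x4)} with hS
  set G' : SimpleGraph V := SimpleGraph.fromEdgeSet S with hG'
  obtain ⟨c', hbd, hcl⟩ := hcol
  set m := (Fintype.card V - 1) / 2 with hm
  -- basic adjacency facts
  have hvx : ∀ y, y ∈ ({x1, x2, x3, x4} : Set V) → G.Adj v y := by
    intro y hy
    rw [← hN] at hy
    exact hy
  have ha1 : G.Adj v x1 := hvx _ (by simp)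
  have ha2 : G.Adj v x2 := hvx _ (by simp)
  have ha3 : G.Adj v x3 := hvx _ (by simp)
  have ha4 : G.Adj v x4 := hvx _ (by simp)
  have hv1 : v ≠ x1 := ha1.ne
  have hv2 : v ≠ x2 := ha2.ne
  have hv3 : v ≠ x3 := ha3.ne
  have hv4 : v ≠ x4 := ha4.ne
  -- Sym2 inequalities
  have n13 : s(v, x1) ≠ s(v, x3) := fun h => hne13 (Sym2.congr_right.mp h)
  have n14 : s(v, x1) ≠ s(v, x4) := fun h => hne14 (Sym2.congr_right.mp h)
  have n23 : s(v, x2) ≠ s(v, x3) := fun h => hne23 (Sym2.congr_right.mp h)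
  have n24 : s(v, x2) ≠ s(v, x4) := fun h => hne24 (Sym2.congr_right.mp h)
  have n34 : s(v, x3) ≠ s(v, x4) := fun h => hne34 (Sym2.congr_right.mp h)
  have n12 : s(v, x1) ≠ s(v, x2) := fun h => hne12 (Sym2.congr_right.mp h)
  have n12_3 : s(x1, x2) ≠ s(v, x3) := by
    rw [Ne, Sym2.eq_iff]
    rintro (⟨h1, -⟩ | ⟨-, h2⟩)
    · exact hv1 h1.symm
    · exact hv2 h2.symm
  have n12_4 : s(x1, x2) ≠ s(v, x4) := by
    rw [Ne, Sym2.eq_iff]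
    rintro (⟨h1, -⟩ | ⟨-, h2⟩)
    · exact hv1 h1.symm
    · exact hv2 h2.symm
  have n12_34 : s(x1, x2) ≠ s(x3, x4) := by
    rw [Ne, Sym2.eq_iff]
    rintro (⟨h1, -⟩ | ⟨h1, -⟩)
    · exact hne13 h1
    · exact hne14 h1
  have n34_3 : s(x3, x4) ≠ s(v, x3) := by
    rw [Ne, Sym2.eq_iff]
    rintro (⟨h1, -⟩ | ⟨-, h2⟩)
    · exact hv3 h1.symm
    · exact hv4 h2.symm
  have n34_4 : s(x3, x4) ≠ s(v, x4) := by
    rw [Ne, Sym2.eq_iff]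
    rintro (⟨h1, -⟩ | ⟨h1, -⟩)
    · exact hv3 h1.symm
    · exact hne34 h1
  have n1_12 : s(v, x1) ≠ s(x1, x2) := by
    rw [Ne, Sym2.eq_iff]
    rintro (⟨h1, -⟩ | ⟨h1, -⟩)
    · exact hv1 h1
    · exact hv2 h1
  have n2_12 : s(v, x2) ≠ s(x1, x2) := by
    rw [Ne, Sym2.eq_iff]
    rintro (⟨h1, -⟩ | ⟨h1, -⟩)
    · exact hv1 h1
    · exact hv2 h1
  have n1_34 : s(v, x1) ≠ s(x3, x4) := by
    rw [Ne, Sym2.eq_iff]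
    rintro (⟨h1, -⟩ | ⟨h1, -⟩)
    · exact hv3 h1
    · exact hv4 h1
  have n2_34 : s(v, x2) ≠ s(x3, x4) := by
    rw [Ne, Sym2.eq_iff]
    rintro (⟨h1, -⟩ | ⟨h1, -⟩)
    · exact hv3 h1
    · exact hv4 h1
  -- edge set of G'
  have hG'edge : G'.edgeSet = S := by
    rw [hG', SimpleGraph.edgeSet_fromEdgeSet]
    ext e
    simp only [Set.mem_diff, Set.mem_setOf_eq, and_iff_left_iff_imp]
    intro heS hdiag
    rcases heS with ⟨heG, -⟩ | he34
    · exact G.not_isDiag_of_mem_edgeSet heG hdiag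
    · rw [Set.mem_singleton_iff] at he34
      rw [he34, Sym2.mem_diagSet, Sym2.mk_isDiag_iff] at hdiag
      exact hne34 hdiag
  have hmemG' : ∀ e : Sym2 V, e ∈ G'.edgeSet ↔
      ((e ∈ G.edgeSet ∧ e ≠ s(v, x3) ∧ e ≠ s(v, x4)) ∨ e = s(x3, x4)) := by
    intro e
    rw [hG'edge, hS]
    simp only [Set.mem_union, Set.mem_diff, Set.mem_insert_iff, Set.mem_singleton_iff, not_or]
  -- memberships
  have he3G : s(v, x3) ∈ G.edgeSet := ha3
  have he4G : s(v, x4) ∈ G.edgeSet := ha4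
  have he12G : s(x1, x2) ∈ G.edgeSet := h12
  have he34G : s(x3, x4) ∉ G.edgeSet := h34
  have he1GG : s(v, x1) ∈ G.edgeSet := ha1
  have he2GG : s(v, x2) ∈ G.edgeSet := ha2
  have he34G' : s(x3, x4) ∈ G'.edgeSet := (hmemG' _).mpr (Or.inr rfl)
  have he1G' : s(v, x1) ∈ G'.edgeSet := (hmemG' _).mpr (Or.inl ⟨ha1, n13, n14⟩)
  have he2G' : s(v, x2) ∈ G'.edgeSet := (hmemG' _).mpr (Or.inl ⟨ha2, n23, n24⟩)
  have he12G' : s(x1, x2) ∈ G'.edgeSet := (hmemG' _).mpr (Or.inl ⟨h12, n12_3, n12_4⟩)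
  have he3G' : s(v, x3) ∉ G'.edgeSet := by
    rw [hmemG']
    rintro (⟨-, h, -⟩ | h)
    · exact h rfl
    · exact n34_3 h.symm
  have he4G' : s(v, x4) ∉ G'.edgeSet := by
    rw [hmemG']
    rintro (⟨-, -, h⟩ | h)
    · exact h rfl
    · exact n34_4 h.symm
  -- edges of G' at v
  have hvG' : ∀ e ∈ G'.edgeSet, v ∈ e → e = s(v, x1) ∨ e = s(v, x2) := by
    intro e heG' hve
    obtain ⟨y, rfl⟩ := Sym2.mem_iff_exists.mp hve
    rcases (hmemG' _).mp heG' with ⟨heG, h3, h4⟩ | h34'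
    · have hy : y ∈ G.neighborSet v := heG
      rw [hN] at hy
      rcases hy with rfl | rfl | rfl | rfl
      · exact Or.inl rfl
      · exact Or.inr rfl
      · exact absurd rfl h3
      · exact absurd rfl h4
    · exfalso
      rw [Sym2.eq_iff] at h34'
      rcases h34' with ⟨h1, -⟩ | ⟨h1, -⟩
      · exact hv3 h1
      · exact hv4 h1
  -- the colour class of s(x3,x4)
  set i := c' s(x3, x4) with hi
  obtain ⟨u0, Cw, hCcyc, hCeq⟩ := hcl i ⟨s(x3, x4), he34G', rfl⟩
  have hCmem : ∀ e, e ∈ Cw.edges ↔ (e ∈ G'.edgeSet ∧ c' e = i) := by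
    intro e
    have := Set.ext_iff.mp hCeq e
    simpa using this.symm
  have he34C : s(x3, x4) ∈ Cw.edges := (hCmem _).mpr ⟨he34G', rfl⟩
  obtain ⟨p, hpPath, hp34, hpedges⟩ := cycle_split hCcyc he34C
  have hpE : ∀ e ∈ p.edges, e ∈ G'.edgeSet ∧ c' e = i := by
    intro e he
    exact (hCmem e).mp ((hpedges e).mpr (Or.inr he))
  have hpne34 : ∀ e ∈ p.edges, e ≠ s(x3, x4) := by
    intro e he heq
    exact hp34 (heq ▸ he)
  have hpG : ∀ e ∈ p.edges, e ∈ G.edgeSet := by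
    intro e he
    rcases (hmemG' _).mp (hpE e he).1 with ⟨h1, -, -⟩ | h1
    · exact h1
    · exact absurd h1 (hpne34 e he)
  have hpne3 : ∀ e ∈ p.edges, e ≠ s(v, x3) := by
    intro e he heq
    exact he3G' (heq ▸ (hpE e he).1)
  have hpne4 : ∀ e ∈ p.edges, e ≠ s(v, x4) := by
    intro e he heq
    exact he4G' (heq ▸ (hpE e he).1)
  by_cases hvp : v ∈ p.support
  case neg =>
    -- CASE 2 : v not on the cycle of colour i
    -- transfer p to G
    set pG : G.Walk x4 x3 := p.transfer G hpG with hpG'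
    set W : G.Walk v v :=
      Walk.cons ha4 (pG.append (Walk.cons ha3.symm Walk.nil)) with hW
    have hWedges : ∀ e, e ∈ W.edges ↔
        (e = s(v, x4) ∨ e ∈ p.edges ∨ e = s(x3, v)) := by
      intro e
      rw [hW, hpG']
      simp [edges_append, edges_transfer, List.mem_append]
    have hvpe : ∀ e ∈ p.edges, v ∉ e := by
      intro e he hve
      obtain ⟨y, rfl⟩ := Sym2.mem_iff_exists.mp hve
      exact hvp (p.fst_mem_support_of_mem_edges he)
    have hWcyc : W.IsCycle := by
      rw [hW, cons_isCycle_iff]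
      constructor
      · rw [isPath_def, support_append]
        simp only [support_cons, support_nil, List.tail_cons]
        rw [List.nodup_append]
        refine ⟨?_, List.nodup_singleton v, ?_⟩
        · rw [support_transfer]
          exact hpPath.support_nodup
        · intro x hx y hxv hxy
          rw [List.mem_singleton] at hxv
          subst hxv hxy
          rw [support_transfer] at hx
          exact hvp hx
      · rw [edges_append]
        simp only [edges_cons, edges_nil, List.mem_append, List.mem_cons,
          List.not_mem_nil, or_false, not_or]
        constructor
        · rw [edges_transfer]
          intro hmem
          exact hvpe _ hmem (by simp)
        · intro h
          rw [Sym2.eq_iff] at h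
          rcases h with ⟨h1, -⟩ | ⟨-, h2⟩
          · exact hv3 h1
          · exact hne34 h2.symm
    -- the new colouring
    set c : Sym2 V → ℕ := fun e => if e = s(v, x3) ∨ e = s(v, x4) then i else c' e with hc
    have hc3 : c s(v, x3) = i := by simp [hc]
    have hc4 : c s(v, x4) = i := by simp [hc]
    have hcother : ∀ e, e ≠ s(v, x3) → e ≠ s(v, x4) → c e = c' e := by
      intro e h1 h2
      rw [hc]
      simp [h1, h2]
    have hibd : 1 ≤ i ∧ i ≤ m := hbd _ he34G'
    -- class i in G
    have hclassi : {e ∈ G.edgeSet | c e = i} = {e | e ∈ W.edges} := by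
      ext e
      simp only [Set.mem_setOf_eq, hWedges]
      constructor
      · rintro ⟨heG, hce⟩
        by_cases h3 : e = s(v, x3)
        · exact Or.inr (Or.inr (h3.trans Sym2.eq_swap))
        by_cases h4 : e = s(v, x4)
        · exact Or.inl h4
        rw [hcother e h3 h4] at hce
        have heG' : e ∈ G'.edgeSet := (hmemG' _).mpr (Or.inl ⟨heG, h3, h4⟩)
        rcases (hpedges e).mp ((hCmem e).mpr ⟨heG', hce⟩) with rfl | hpe
        · exact absurd heG he34G
        · exact Or.inr (Or.inl hpe)
      · rintro (rfl | hpe | rfl)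
        · exact ⟨he4G, hc4⟩
        · refine ⟨hpG e hpe, ?_⟩
          rw [hcother e (hpne3 e hpe) (hpne4 e hpe)]
          exact (hpE e hpe).2
        · exact ⟨Sym2.eq_swap ▸ he3G, Sym2.eq_swap ▸ hc3⟩
    -- other classes
    have hgen : ∀ l, l ≠ i → {e ∈ G.edgeSet | c e = l} = {e ∈ G'.edgeSet | c' e = l} := by
      intro l hl
      ext e
      simp only [Set.mem_setOf_eq]
      constructor
      · rintro ⟨heG, hce⟩
        have h3 : e ≠ s(v, x3) := by rintro rfl; rw [hc3] at hce; exact hl hce.symm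
        have h4 : e ≠ s(v, x4) := by rintro rfl; rw [hc4] at hce; exact hl hce.symm
        rw [hcother e h3 h4] at hce
        exact ⟨(hmemG' _).mpr (Or.inl ⟨heG, h3, h4⟩), hce⟩
      · rintro ⟨heG', hce⟩
        have h34' : e ≠ s(x3, x4) := by rintro rfl; exact hl (hi.trans hce).symm
        have h3 : e ≠ s(v, x3) := by rintro rfl; exact he3G' heG'
        have h4 : e ≠ s(v, x4) := by rintro rfl; exact he4G' heG'
        rcases (hmemG' _).mp heG' with ⟨heG, -, -⟩ | h1
        · exact ⟨heG, (hcother e h3 h4).trans hce⟩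
        · exact absurd h1 h34'
    refine ⟨c, ?_, ?_⟩
    · -- bounds
      intro e heG
      by_cases h3 : e = s(v, x3)
      · rw [h3, hc3]; exact hibd
      by_cases h4 : e = s(v, x4)
      · rw [h4, hc4]; exact hibd
      rw [hcother e h3 h4]
      exact hbd e ((hmemG' _).mpr (Or.inl ⟨heG, h3, h4⟩))
    · -- classes
      intro l hlne
      by_cases hl : l = i
      · subst hl
        rw [hclassi]
        exact ⟨v, W, hWcyc, rfl⟩
      · rw [hgen l hl] at hlne ⊢
        have hcyc' := hcl l hlne
        refine cycSet_transfer hcyc' ?_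
        rintro e ⟨heG', hce⟩
        have h34' : e ≠ s(x3, x4) := by rintro rfl; exact hl (hi.trans hce).symm
        rcases (hmemG' _).mp heG' with ⟨heG, -, -⟩ | h1
        · exact heG
        · exact absurd h1 h34'
  case pos =>
    -- CASE 1 : v lies on the cycle of colour i
    set p1 := p.takeUntil v hvp with hp1def
    set p2 := p.dropUntil v hvp with hp2def
    have hspec : p1.append p2 = p := take_spec p hvp
    have hp1Path : p1.IsPath := hpPath.takeUntil hvp
    have hp2Path : p2.IsPath := hpPath.dropUntil hvp
    have hpedgesplit : ∀ e, e ∈ p.edges ↔ e ∈ p1.edges ∨ e ∈ p2.edges := by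
      intro e
      conv_lhs => rw [← hspec]
      rw [edges_append, List.mem_append]
    have hpnodupE : (p1.edges ++ p2.edges).Nodup := by
      rw [← edges_append, hspec]; exact hpPath.edges_nodup
    have hdisjE : ∀ e, e ∈ p1.edges → e ∈ p2.edges → False := by
      intro e h1 h2
      exact (List.disjoint_of_nodup_append hpnodupE) h1 h2
    have hpnodupS : (p1.support ++ p2.support.tail).Nodup := by
      rw [← support_append, hspec]; exact hpPath.support_nodup
    have hdisjS : ∀ x, x ∈ p1.support → x ∈ p2.support.tail → False := by
      intro x h1 h2
      exact (List.disjoint_of_nodup_append hpnodupS) h1 h2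
    obtain ⟨y, hy, r2, hp2eq⟩ := not_nil_iff.mp (not_nil_of_ne (p := p2) hv3)
    obtain ⟨z, hz, r1, hp1eq⟩ := not_nil_iff.mp (not_nil_of_ne (p := p1.reverse) hv4)
    have hy12 : y = x1 ∨ y = x2 := by
      rcases hvG' s(v, y) hy (Sym2.mem_mk_left _ _) with h | h
      · exact Or.inl (Sym2.congr_right.mp h)
      · exact Or.inr (Sym2.congr_right.mp h)
    have hz12 : z = x1 ∨ z = x2 := by
      rcases hvG' s(v, z) hz (Sym2.mem_mk_left _ _) with h | h
      · exact Or.inl (Sym2.congr_right.mp h)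
      · exact Or.inr (Sym2.congr_right.mp h)
    have hsvz_p1 : s(v, z) ∈ p1.edges := by
      rw [← List.mem_reverse, ← edges_reverse, hp1eq]
      simp
    have hsvy_p2 : s(v, y) ∈ p2.edges := by rw [hp2eq]; simp
    have hzy : z ≠ y := by
      rintro rfl
      exact hdisjE s(v, z) hsvz_p1 hsvy_p2
    have hzy12 : (z = x1 ∧ y = x2) ∨ (z = x2 ∧ y = x1) := by
      rcases hz12 with rfl | rfl <;> rcases hy12 with rfl | rfl
      · exact absurd rfl hzy
      · exact Or.inl ⟨rfl, rfl⟩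
      · exact Or.inr ⟨rfl, rfl⟩
      · exact absurd rfl hzy
    have hAdjzy : G.Adj z y := by
      rcases hzy12 with ⟨rfl, rfl⟩ | ⟨rfl, rfl⟩
      · exact h12
      · exact h12.symm
    have hszy12 : s(z, y) = s(x1, x2) := by
      rcases hzy12 with ⟨rfl, rfl⟩ | ⟨rfl, rfl⟩
      · rfl
      · exact Sym2.eq_swap
    have hvz : v ≠ z := hz.ne
    have hvy : v ≠ y := hy.ne
    have hp2consPath := (cons_isPath_iff hy r2).mp (hp2eq ▸ hp2Path)
    have hr2Path : r2.IsPath := hp2consPath.1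
    have hvr2 : v ∉ r2.support := hp2consPath.2
    have hp1rev : p1.reverse.IsPath := hp1Path.reverse
    have hp1consPath := (cons_isPath_iff hz r1).mp (hp1eq ▸ hp1rev)
    have hr1Path : r1.IsPath := hp1consPath.1
    have hvr1 : v ∉ r1.support := hp1consPath.2
    have hp1edgesplit : ∀ e, e ∈ p1.edges ↔ e = s(v, z) ∨ e ∈ r1.edges := by
      intro e
      rw [← List.mem_reverse, ← edges_reverse, hp1eq, edges_cons, List.mem_cons]
    have hp2edgesplit : ∀ e, e ∈ p2.edges ↔ e = s(v, y) ∨ e ∈ r2.edges := by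
      intro e
      rw [hp2eq, edges_cons, List.mem_cons]
    have hr1subS : ∀ x ∈ r1.support, x ∈ p1.support := by
      intro x hx
      have hx2 : x ∈ p1.reverse.support := by
        rw [hp1eq, support_cons]
        exact List.mem_cons_of_mem _ hx
      rwa [support_reverse, List.mem_reverse] at hx2
    have hr2S : r2.support = p2.support.tail := by
      rw [hp2eq, support_cons, List.tail_cons]
    have hvnotr1e : ∀ e ∈ r1.edges, v ∉ e := by
      intro e he hv'
      obtain ⟨w', rfl⟩ := Sym2.mem_iff_exists.mp hv'
      exact hvr1 (r1.fst_mem_support_of_mem_edges he)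
    have hvnotr2e : ∀ e ∈ r2.edges, v ∉ e := by
      intro e he hv'
      obtain ⟨w', rfl⟩ := Sym2.mem_iff_exists.mp hv'
      exact hvr2 (r2.fst_mem_support_of_mem_edges he)
    have he12p : s(z, y) ∉ p.edges := by
      intro hmem
      rcases (hpedgesplit _).mp hmem with h1 | h2
      · rcases (hp1edgesplit _).mp h1 with heq | hr1e
        · rw [Sym2.eq_iff] at heq
          rcases heq with ⟨h1', -⟩ | ⟨-, h2'⟩
          · exact hvz h1'.symm
          · exact hvy h2'.symm
        · have hy1 : y ∈ r1.support := r1.snd_mem_support_of_mem_edges hr1e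
          have hy2 : y ∈ p2.support.tail := hr2S ▸ r2.start_mem_support
          exact hdisjS y (hr1subS y hy1) hy2
      · rcases (hp2edgesplit _).mp h2 with heq | hr2e
        · rw [Sym2.eq_iff] at heq
          rcases heq with ⟨h1', -⟩ | ⟨h1', -⟩
          · exact hvz h1'.symm
          · exact hzy h1'
        · have hz2 : z ∈ r2.support := r2.fst_mem_support_of_mem_edges hr2e
          have hz1 : z ∈ p1.support := hr1subS z r1.start_mem_support
          exact hdisjS z hz1 (hr2S ▸ hz2)
    have hcvz : c' s(v, z) = i := (hpE _ ((hpedgesplit _).mpr (Or.inl hsvz_p1))).2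
    have hcvy : c' s(v, y) = i := (hpE _ ((hpedgesplit _).mpr (Or.inr hsvy_p2))).2
    have hc1i : c' s(v, x1) = i := by
      rcases hzy12 with ⟨h1, -⟩ | ⟨-, h2⟩
      · rw [← h1]; exact hcvz
      · rw [← h2]; exact hcvy
    have hc2i : c' s(v, x2) = i := by
      rcases hzy12 with ⟨-, h2⟩ | ⟨h1, -⟩
      · rw [← h2]; exact hcvy
      · rw [← h1]; exact hcvz
    have hc12 : c' s(x1, x2) ≠ i := by
      intro h
      have hmem : s(x1, x2) ∈ Cw.edges := (hCmem _).mpr ⟨he12G', h⟩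
      rcases (hpedges _).mp hmem with heq | hmem2
      · exact n12_34 heq
      · exact he12p (by rw [hszy12]; exact hmem2)
    set j := c' s(x1, x2) with hj
    have hji : j ≠ i := hc12
    obtain ⟨u1, Dw, hDcyc, hDeq⟩ := hcl j ⟨s(x1, x2), he12G', rfl⟩
    have hDmem : ∀ e, e ∈ Dw.edges ↔ (e ∈ G'.edgeSet ∧ c' e = j) := by
      intro e
      have := Set.ext_iff.mp hDeq e
      simpa using this.symm
    have he12D : s(x1, x2) ∈ Dw.edges := (hDmem _).mpr ⟨he12G', rfl⟩
    obtain ⟨pj, hpjPath, hpj12, hpjedges⟩ := cycle_split hDcyc he12D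
    have hpjE : ∀ e ∈ pj.edges, e ∈ G'.edgeSet ∧ c' e = j := fun e he =>
      (hDmem e).mp ((hpjedges e).mpr (Or.inr he))
    have hpjne34 : ∀ e ∈ pj.edges, e ≠ s(x3, x4) := by
      intro e he heq
      have h2 := (hpjE e he).2
      rw [heq] at h2
      exact hji (hi.trans h2).symm
    have hpjG : ∀ e ∈ pj.edges, e ∈ G.edgeSet := by
      intro e he
      rcases (hmemG' _).mp (hpjE e he).1 with ⟨h1, -, -⟩ | h1
      · exact h1
      · exact absurd h1 (hpjne34 e he)
    have hvpj : v ∉ pj.support := by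
      intro hv'
      obtain ⟨e, he, hve⟩ := exists_edge_of_mem_support pj hv' (not_nil_of_ne hne12.symm)
      rcases hvG' e (hpjE e he).1 hve with rfl | rfl
      · exact hji (((hpjE _ he).2).symm.trans hc1i)
      · exact hji (((hpjE _ he).2).symm.trans hc2i)
    have hpjne1 : ∀ e ∈ pj.edges, e ≠ s(v, x1) := by
      intro e he heq
      rw [heq] at he
      exact hvpj (pj.fst_mem_support_of_mem_edges he)
    have hpjne2 : ∀ e ∈ pj.edges, e ≠ s(v, x2) := by
      intro e he heq
      rw [heq] at he
      exact hvpj (pj.fst_mem_support_of_mem_edges he)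
    -- new colouring
    set c : Sym2 V → ℕ := fun e =>
      if e = s(v, x3) ∨ e = s(v, x4) ∨ e = s(x1, x2) then i
      else if e = s(v, x1) ∨ e = s(v, x2) then j
      else c' e with hc
    have hc3 : c s(v, x3) = i := by simp [hc]
    have hc4 : c s(v, x4) = i := by simp [hc]
    have hc12' : c s(x1, x2) = i := by simp [hc]
    have hcv1 : c s(v, x1) = j := by simp [hc, n13, n14, n1_12]
    have hcv2 : c s(v, x2) = j := by simp [hc, n23, n24, n2_12]
    have hcother : ∀ e, e ≠ s(v, x3) → e ≠ s(v, x4) → e ≠ s(x1, x2) →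
        e ≠ s(v, x1) → e ≠ s(v, x2) → c e = c' e := by
      intro e h1 h2 h3 h4 h5
      simp [hc, h1, h2, h3, h4, h5]
    -- the cycle for colour i
    have hr1edG : ∀ e ∈ r1.reverse.edges, e ∈ G.edgeSet := by
      intro e he
      rw [edges_reverse, List.mem_reverse] at he
      exact hpG e ((hpedgesplit e).mpr (Or.inl ((hp1edgesplit e).mpr (Or.inr he))))
    have hr2edG : ∀ e ∈ r2.edges, e ∈ G.edgeSet := fun e he =>
      hpG e ((hpedgesplit e).mpr (Or.inr ((hp2edgesplit e).mpr (Or.inr he))))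
    set r1G : G.Walk x4 z := r1.reverse.transfer G hr1edG with hr1G
    set r2G : G.Walk y x3 := r2.transfer G hr2edG with hr2G
    set W : G.Walk v v :=
      Walk.cons ha4 ((r1G.append (Walk.cons hAdjzy r2G)).append
        (Walk.cons ha3.symm Walk.nil)) with hW
    have hWedges : ∀ e, e ∈ W.edges ↔
        (e = s(v, x4) ∨ e ∈ r1.edges ∨ e = s(z, y) ∨ e ∈ r2.edges ∨ e = s(x3, v)) := by
      intro e
      rw [hW, hr1G, hr2G]
      simp [edges_append, edges_transfer, List.mem_append, edges_reverse,
        List.mem_reverse, or_assoc]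
    have hWcyc : W.IsCycle := by
      rw [hW, cons_isCycle_iff]
      constructor
      · rw [isPath_def]
        simp only [support_append, hr1G, hr2G, support_transfer, support_cons,
          support_nil, List.tail_cons, support_reverse]
        rw [List.nodup_append]
        refine ⟨?_, List.nodup_singleton v, ?_⟩
        · rw [List.nodup_append]
          refine ⟨List.nodup_reverse.mpr hr1Path.support_nodup, hr2Path.support_nodup, ?_⟩
          intro x hx y hx2 hxy
          subst hxy
          rw [List.mem_reverse] at hx
          exact hdisjS x (hr1subS x hx) (hr2S ▸ hx2)
        · intro x hx y hxv hxy
          rw [List.mem_singleton] at hxv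
          subst hxv hxy
          rw [List.mem_append, List.mem_reverse] at hx
          rcases hx with hx | hx
          · exact hvr1 hx
          · exact hvr2 hx
      · simp only [edges_append, hr1G, hr2G, edges_transfer, edges_cons, edges_nil,
          edges_reverse, List.mem_append, List.mem_reverse, List.mem_cons,
          List.not_mem_nil, or_false]
        rintro ((h | h | h) | h)
        · exact hvnotr1e _ h (Sym2.mem_mk_left _ _)
        · rw [Sym2.eq_iff] at h
          rcases h with ⟨h1, -⟩ | ⟨h1, -⟩
          · exact hvz h1
          · exact hvy h1
        · exact hvnotr2e _ h (Sym2.mem_mk_left _ _)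
        · rw [Sym2.eq_iff] at h
          rcases h with ⟨h1, -⟩ | ⟨-, h2⟩
          · exact hv3 h1
          · exact hne34 h2.symm
    -- the cycle for colour j
    set pjG : G.Walk x2 x1 := pj.transfer G hpjG with hpjGdef
    set Wj : G.Walk v v :=
      Walk.cons ha2 (pjG.append (Walk.cons ha1.symm Walk.nil)) with hWj
    have hWjedges : ∀ e, e ∈ Wj.edges ↔
        (e = s(v, x2) ∨ e ∈ pj.edges ∨ e = s(x1, v)) := by
      intro e
      rw [hWj, hpjGdef]
      simp [edges_append, edges_transfer, List.mem_append]
    have hWjcyc : Wj.IsCycle := by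
      rw [hWj, cons_isCycle_iff]
      constructor
      · rw [isPath_def, support_append, hpjGdef, support_transfer]
        simp only [support_cons, support_nil, List.tail_cons]
        rw [List.nodup_append]
        exact ⟨hpjPath.support_nodup, List.nodup_singleton v,
          fun x hx y hxv hxy => by subst hxy; rw [List.mem_singleton] at hxv; subst hxv; exact hvpj hx⟩
      · rw [edges_append, hpjGdef, edges_transfer]
        simp only [edges_cons, edges_nil, List.mem_append, List.mem_cons,
          List.not_mem_nil, or_false]
        rintro (h | h)
        · exact hpjne2 _ h rfl
        · rw [Sym2.eq_iff] at h
          rcases h with ⟨h1, -⟩ | ⟨-, h2⟩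
          · exact hv1 h1
          · exact hne12 h2.symm
    -- class i
    have hclassi : {e ∈ G.edgeSet | c e = i} = {e | e ∈ W.edges} := by
      ext e
      simp only [Set.mem_setOf_eq, hWedges]
      constructor
      · rintro ⟨heG, hce⟩
        by_cases h3 : e = s(v, x3)
        · subst h3
          exact Or.inr (Or.inr (Or.inr (Or.inr Sym2.eq_swap)))
        by_cases h4 : e = s(v, x4)
        · exact Or.inl h4
        by_cases h5 : e = s(x1, x2)
        · subst h5
          exact Or.inr (Or.inr (Or.inl hszy12.symm))
        by_cases h6 : e = s(v, x1)
        · subst h6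
          rw [hcv1] at hce
          exact absurd hce hji
        by_cases h7 : e = s(v, x2)
        · subst h7
          rw [hcv2] at hce
          exact absurd hce hji
        rw [hcother e h3 h4 h5 h6 h7] at hce
        have heG' : e ∈ G'.edgeSet := (hmemG' _).mpr (Or.inl ⟨heG, h3, h4⟩)
        rcases (hpedges e).mp ((hCmem e).mpr ⟨heG', hce⟩) with rfl | hpe
        · exact absurd heG he34G
        rcases (hpedgesplit e).mp hpe with h1 | h2
        · rcases (hp1edgesplit e).mp h1 with heq | hr1e
          · exfalso
            rcases hzy12 with ⟨hz1, -⟩ | ⟨hz1, -⟩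
            · exact h6 (heq.trans (by rw [hz1]))
            · exact h7 (heq.trans (by rw [hz1]))
          · exact Or.inr (Or.inl hr1e)
        · rcases (hp2edgesplit e).mp h2 with heq | hr2e
          · exfalso
            rcases hzy12 with ⟨-, hy1⟩ | ⟨-, hy1⟩
            · exact h7 (heq.trans (by rw [hy1]))
            · exact h6 (heq.trans (by rw [hy1]))
          · exact Or.inr (Or.inr (Or.inr (Or.inl hr2e)))
      · rintro (rfl | hr1e | rfl | hr2e | rfl)
        · exact ⟨he4G, hc4⟩
        · have hpe : e ∈ p.edges :=
            (hpedgesplit e).mpr (Or.inl ((hp1edgesplit e).mpr (Or.inr hr1e)))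
          refine ⟨hpG e hpe, ?_⟩
          have h6 : e ≠ s(v, x1) := fun heq =>
            hvnotr1e e hr1e (heq ▸ Sym2.mem_mk_left v x1)
          have h7 : e ≠ s(v, x2) := fun heq =>
            hvnotr1e e hr1e (heq ▸ Sym2.mem_mk_left v x2)
          have h5 : e ≠ s(x1, x2) := fun heq =>
            he12p (by rw [hszy12, ← heq]; exact hpe)
          rw [hcother e (hpne3 e hpe) (hpne4 e hpe) h5 h6 h7]
          exact (hpE e hpe).2
        · exact ⟨by rw [hszy12]; exact he12G, by rw [hszy12]; exact hc12'⟩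
        · have hpe : e ∈ p.edges :=
            (hpedgesplit e).mpr (Or.inr ((hp2edgesplit e).mpr (Or.inr hr2e)))
          refine ⟨hpG e hpe, ?_⟩
          have h6 : e ≠ s(v, x1) := fun heq =>
            hvnotr2e e hr2e (heq ▸ Sym2.mem_mk_left v x1)
          have h7 : e ≠ s(v, x2) := fun heq =>
            hvnotr2e e hr2e (heq ▸ Sym2.mem_mk_left v x2)
          have h5 : e ≠ s(x1, x2) := fun heq =>
            he12p (by rw [hszy12, ← heq]; exact hpe)
          rw [hcother e (hpne3 e hpe) (hpne4 e hpe) h5 h6 h7]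
          exact (hpE e hpe).2
        · exact ⟨Sym2.eq_swap ▸ he3G, Sym2.eq_swap ▸ hc3⟩
    -- class j
    have hclassj : {e ∈ G.edgeSet | c e = j} = {e | e ∈ Wj.edges} := by
      ext e
      simp only [Set.mem_setOf_eq, hWjedges]
      constructor
      · rintro ⟨heG, hce⟩
        by_cases h3 : e = s(v, x3)
        · subst h3
          rw [hc3] at hce
          exact absurd hce.symm hji
        by_cases h4 : e = s(v, x4)
        · subst h4
          rw [hc4] at hce
          exact absurd hce.symm hji
        by_cases h5 : e = s(x1, x2)
        · subst h5
          rw [hc12'] at hce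
          exact absurd hce.symm hji
        by_cases h6 : e = s(v, x1)
        · subst h6
          exact Or.inr (Or.inr Sym2.eq_swap)
        by_cases h7 : e = s(v, x2)
        · exact Or.inl h7
        rw [hcother e h3 h4 h5 h6 h7] at hce
        have heG' : e ∈ G'.edgeSet := (hmemG' _).mpr (Or.inl ⟨heG, h3, h4⟩)
        rcases (hpjedges e).mp ((hDmem e).mpr ⟨heG', hce⟩) with rfl | hpe
        · exact absurd rfl h5
        · exact Or.inr (Or.inl hpe)
      · rintro (rfl | hpe | rfl)
        · exact ⟨he2GG, hcv2⟩
        · refine ⟨hpjG e hpe, ?_⟩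
          have h3 : e ≠ s(v, x3) := fun heq => he3G' (heq ▸ (hpjE e hpe).1)
          have h4 : e ≠ s(v, x4) := fun heq => he4G' (heq ▸ (hpjE e hpe).1)
          have h5 : e ≠ s(x1, x2) := fun heq => hpj12 (heq ▸ hpe)
          rw [hcother e h3 h4 h5 (hpjne1 e hpe) (hpjne2 e hpe)]
          exact (hpjE e hpe).2
        · exact ⟨Sym2.eq_swap ▸ he1GG, Sym2.eq_swap ▸ hcv1⟩
    -- other classes
    have hgen : ∀ l, l ≠ i → l ≠ j →
        {e ∈ G.edgeSet | c e = l} = {e ∈ G'.edgeSet | c' e = l} := by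
      intro l hli hlj
      ext e
      simp only [Set.mem_setOf_eq]
      constructor
      · rintro ⟨heG, hce⟩
        have h3 : e ≠ s(v, x3) := by rintro rfl; rw [hc3] at hce; exact hli hce.symm
        have h4 : e ≠ s(v, x4) := by rintro rfl; rw [hc4] at hce; exact hli hce.symm
        have h5 : e ≠ s(x1, x2) := by rintro rfl; rw [hc12'] at hce; exact hli hce.symm
        have h6 : e ≠ s(v, x1) := by rintro rfl; rw [hcv1] at hce; exact hlj hce.symm
        have h7 : e ≠ s(v, x2) := by rintro rfl; rw [hcv2] at hce; exact hlj hce.symm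
        rw [hcother e h3 h4 h5 h6 h7] at hce
        exact ⟨(hmemG' _).mpr (Or.inl ⟨heG, h3, h4⟩), hce⟩
      · rintro ⟨heG', hce⟩
        have h34' : e ≠ s(x3, x4) := by rintro rfl; exact hli (hi.trans hce).symm
        have h5 : e ≠ s(x1, x2) := by rintro rfl; exact hlj (hj.trans hce).symm
        have h6 : e ≠ s(v, x1) := by
          rintro rfl; exact hli (hc1i.symm.trans hce).symm
        have h7 : e ≠ s(v, x2) := by
          rintro rfl; exact hli (hc2i.symm.trans hce).symm
        have h3 : e ≠ s(v, x3) := by rintro rfl; exact he3G' heG'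
        have h4 : e ≠ s(v, x4) := by rintro rfl; exact he4G' heG'
        rcases (hmemG' _).mp heG' with ⟨heG, -, -⟩ | h1
        · exact ⟨heG, (hcother e h3 h4 h5 h6 h7).trans hce⟩
        · exact absurd h1 h34'
    refine ⟨c, ?_, ?_⟩
    · intro e heG
      by_cases h3 : e = s(v, x3)
      · rw [h3, hc3]; exact hbd _ he34G'
      by_cases h4 : e = s(v, x4)
      · rw [h4, hc4]; exact hbd _ he34G'
      by_cases h5 : e = s(x1, x2)
      · rw [h5, hc12']; exact hbd _ he34G'
      by_cases h6 : e = s(v, x1)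
      · rw [h6, hcv1]; exact hbd _ he12G'
      by_cases h7 : e = s(v, x2)
      · rw [h7, hcv2]; exact hbd _ he12G'
      rw [hcother e h3 h4 h5 h6 h7]
      exact hbd e ((hmemG' _).mpr (Or.inl ⟨heG, h3, h4⟩))
    · intro l hlne
      by_cases hli : l = i
      · subst hli; rw [hclassi]; exact ⟨v, W, hWcyc, rfl⟩
      by_cases hlj : l = j
      · subst hlj; rw [hclassj]; exact ⟨v, Wj, hWjcyc, rfl⟩
      rw [hgen l hli hlj] at hlne ⊢
      have hcyc' := hcl l hlne
      refine cycSet_transfer hcyc' ?_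
      rintro e ⟨heG', hce⟩
      have h34' : e ≠ s(x3, x4) := by rintro rfl; exact hli (hi.trans hce).symm
      rcases (hmemG' _).mp heG' with ⟨heG, -, -⟩ | h1
      · exact heG
      · exact absurd h1 h34'
end
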